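/- arXiv:2601.23118 — 3 statements merged into one kernel-verified Lean document; each statement's English description precedes it below -/
import Mathlib

section
/- If $h_K$ is the supporting function of a compact convex set $K \subset \mathbb{R}^n$, then $\int_{\mathbb{R}^n} e^{-h_K(t)}\,dt < \infty$ if and only if $h_K(t) > 0$ for all $t \neq 0$. -/
open MeasureTheory Set

noncomputable section

lemma aux_exp_abs_integrable {a : ℝ} (ha : 0 < a) :
    Integrable (fun x : ℝ => Real.exp (-(a * |x|))) := by
  have hIoi : IntegrableOn (fun x : ℝ => Real.exp (-(a * |x|))) (Ioi 0) := by
    refine (exp_neg_integrableOn_Ioi 0 ha).congr_fun (fun x hx => ?_) measurableSet_Ioi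
    rw [abs_of_pos hx, ← neg_mul]
  rw [← integrableOn_univ, ← @Iio_union_Ici _ _ (0 : ℝ), integrableOn_union,
    integrableOn_Ici_iff_integrableOn_Ioi]
  refine ⟨?_, hIoi⟩
  rw [← (Measure.measurePreserving_neg (volume : Measure ℝ)).integrableOn_comp_preimage
      (Homeomorph.neg ℝ).measurableEmbedding]
  simpa [Function.comp_def, abs_neg] using hIoi

/-- For the supporting function `h` of a nonempty compact convex set
`K ⊆ ℝⁿ`, `∫ e^{-h} dt < ∞` iff `h(t) > 0` for all `t ≠ 0`. -/
theorem stmt0 {n : ℕ} (K : Set (Fin n → ℝ)) (hcpt : IsCompact K) (hconv : Convex ℝ K)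
    (hne : K.Nonempty) (h : (Fin n → ℝ) → ℝ)
    (hsupp : ∀ t : Fin n → ℝ, IsLUB ((fun a => ∑ i, a i * t i) '' K) (h t)) :
    Integrable (fun t => Real.exp (-(h t))) volume ↔
      ∀ t : Fin n → ℝ, t ≠ 0 → 0 < h t := by
  -- basic consequences of the LUB property
  have hle : ∀ (t : Fin n → ℝ) (b : ℝ), (∀ a ∈ K, ∑ i, a i * t i ≤ b) → h t ≤ b := by
    intro t b hb
    refine (hsupp t).2 ?_
    rintro x ⟨a, ha, rfl⟩
    exact hb a ha
  have hge : ∀ (t : Fin n → ℝ), ∀ a ∈ K, ∑ i, a i * t i ≤ h t := by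
    intro t a ha
    exact (hsupp t).1 ⟨a, ha, rfl⟩
  obtain ⟨r, hrK⟩ := hcpt.isBounded.subset_closedBall 0
  set R : ℝ := max r 0 with hR
  have hR0 : 0 ≤ R := le_max_right _ _
  have hRK : ∀ a ∈ K, ∀ i, |a i| ≤ R := by
    intro a ha i
    have h1 : ‖a‖ ≤ r := by simpa [Metric.mem_closedBall] using hrK ha
    exact le_trans (norm_le_pi_norm a i) (le_trans h1 (le_max_left _ _))
  set C : ℝ := (n : ℝ) * R with hC
  have hC0 : 0 ≤ C := mul_nonneg (Nat.cast_nonneg n) hR0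
  have hfle : ∀ (t : Fin n → ℝ), ∀ a ∈ K, ∑ i, a i * t i ≤ C * ‖t‖ := by
    intro t a ha
    calc ∑ i, a i * t i ≤ ∑ _i : Fin n, R * ‖t‖ := by
          refine Finset.sum_le_sum fun i _ => ?_
          refine le_trans (le_abs_self _) ?_
          rw [abs_mul]
          exact mul_le_mul (hRK a ha i) (norm_le_pi_norm t i) (abs_nonneg _) hR0
      _ = C * ‖t‖ := by simp [hC]; ring
  have hub : ∀ t, h t ≤ C * ‖t‖ := fun t => hle t _ (hfle t)
  obtain ⟨a₀, ha₀⟩ := hne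
  have h0 : h 0 = 0 := by
    have h1 : h 0 ≤ 0 := hle 0 0 (by intro a _; simp)
    have h2 : (0 : ℝ) ≤ h 0 := by simpa using hge 0 a₀ ha₀
    linarith
  have hadd : ∀ s t, h (s + t) ≤ h s + h t := by
    intro s t
    refine hle _ _ fun a ha => ?_
    have : ∑ i, a i * (s + t) i = (∑ i, a i * s i) + ∑ i, a i * t i := by
      rw [← Finset.sum_add_distrib]
      exact Finset.sum_congr rfl fun i _ => by simp [Pi.add_apply]; ring
    rw [this]
    exact add_le_add (hge s a ha) (hge t a ha)
  have hsmul : ∀ (s : ℝ) (t), 0 ≤ s → h (s • t) ≤ s * h t := by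
    intro s t hs
    refine hle _ _ fun a ha => ?_
    have : ∑ i, a i * (s • t) i = s * ∑ i, a i * t i := by
      rw [Finset.mul_sum]
      exact Finset.sum_congr rfl fun i _ => by simp [Pi.smul_apply]; ring
    rw [this]
    exact mul_le_mul_of_nonneg_left (hge t a ha) hs
  have hcont : Continuous h := by
    have hlip : LipschitzWith (Real.toNNReal C) h := by
      refine LipschitzWith.of_dist_le_mul fun s t => ?_
      rw [Real.dist_eq, dist_eq_norm, Real.coe_toNNReal C hC0]
      rw [abs_sub_le_iff]
      constructor
      · have h1 := hadd (s - t) t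
        have h2 := hub (s - t)
        simp only [sub_add_cancel] at h1
        linarith
      · have h1 := hadd (t - s) s
        have h2 := hub (t - s)
        have h3 : ‖t - s‖ = ‖s - t‖ := norm_sub_rev t s
        simp only [sub_add_cancel] at h1
        rw [h3] at h2
        linarith
    exact hlip.continuous
  constructor
  · -- integrable → positive
    intro hint t₀ ht₀ne
    by_contra hneg
    push_neg at hneg
    -- the sublevel set A = {t | h t ≤ C} has infinite measure
    set A : Set (Fin n → ℝ) := {t | h t ≤ C} with hA
    have hAclosed : IsClosed A := isClosed_le hcont continuous_const
    have hAconv : Convex ℝ A := by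
      intro x hx y hy a b haa hbb hab
      have h1 : h (a • x + b • y) ≤ h (a • x) + h (b • y) := hadd _ _
      have h2 : h (a • x) ≤ a * h x := hsmul a x haa
      have h3 : h (b • y) ≤ b * h y := hsmul b y hbb
      have h4 : a * h x ≤ a * C := mul_le_mul_of_nonneg_left hx haa
      have h5 : b * h y ≤ b * C := mul_le_mul_of_nonneg_left hy hbb
      have : h (a • x + b • y) ≤ (a + b) * C := by rw [add_mul]; linarith
      simpa [hA, hab] using this
    have hball : Metric.ball (0 : Fin n → ℝ) 1 ⊆ A := by
      intro x hx
      have : h x ≤ C * ‖x‖ := hub x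
      have hx1 : ‖x‖ < 1 := by simpa [Metric.mem_ball] using hx
      have : C * ‖x‖ ≤ C * 1 := mul_le_mul_of_nonneg_left hx1.le hC0
      simp only [hA, mem_setOf_eq]
      linarith [hub x]
    have hray : ∀ s : ℝ, 0 ≤ s → s • t₀ ∈ A := by
      intro s hs
      have h1 : h (s • t₀) ≤ s * h t₀ := hsmul s t₀ hs
      have h2 : s * h t₀ ≤ 0 := mul_nonpos_of_nonneg_of_nonpos hs hneg
      simp only [hA, mem_setOf_eq]
      linarith
    have ht₀pos : 0 < ‖t₀‖ := norm_pos_iff.mpr ht₀ne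
    set d : ℝ := 2 / ‖t₀‖ with hd
    have hd0 : 0 < d := div_pos two_pos ht₀pos
    have hdt₀ : ‖d • t₀‖ = 2 := by
      rw [norm_smul, Real.norm_eq_abs, abs_of_pos hd0, hd, div_mul_cancel₀]
      exact ht₀pos.ne'
    set c : ℕ → (Fin n → ℝ) := fun m => ((m : ℝ) * d) • t₀ with hc
    have hcm : ∀ m : ℕ, ∀ v : Fin n → ℝ, ‖v‖ < 1 / 2 → c m + v ∈ A := by
      intro m v hv
      have h1 : (2 : ℝ) • v ∈ A := by
        apply hball
        rw [Metric.mem_ball, dist_zero_right, norm_smul]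
        simp only [Real.norm_ofNat]
        linarith
      have h2 : (2 : ℝ) • c m ∈ A := by
        have : (2 : ℝ) • c m = (2 * ((m : ℝ) * d)) • t₀ := by
          rw [hc, smul_smul]
        rw [this]
        exact hray _ (by positivity)
      have := hAconv h1 h2 (by norm_num : (0:ℝ) ≤ 1/2) (by norm_num : (0:ℝ) ≤ 1/2)
        (by norm_num)
      have heq : (1/2 : ℝ) • ((2:ℝ) • v) + (1/2 : ℝ) • ((2:ℝ) • c m) = c m + v := by
        rw [smul_smul, smul_smul]
        norm_num
        abel
      rwa [heq] at this
    have hballs : ∀ m : ℕ, Metric.ball (c m) (1/2) ⊆ A := by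
      intro m x hx
      have : x = c m + (x - c m) := by abel
      rw [this]
      exact hcm m _ (by rw [← dist_eq_norm']; simpa [Metric.mem_ball, dist_comm] using hx)
    have hdisj : Pairwise (Function.onFun Disjoint fun m : ℕ => Metric.ball (c m) (1/2)) := by
      intro m m' hmm'
      apply Metric.ball_disjoint_ball
      rw [dist_eq_norm, hc]
      have : ((m : ℝ) * d) • t₀ - ((m' : ℝ) * d) • t₀ = (((m : ℝ) - m') ) • (d • t₀) := by
        rw [smul_smul, ← sub_smul]; ring_nf
      rw [this, norm_smul, hdt₀, Real.norm_eq_abs]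
      have hne : (m : ℤ) ≠ (m' : ℤ) := by exact_mod_cast hmm'
      have h2 : (1 : ℤ) ≤ |(m : ℤ) - (m' : ℤ)| := Int.one_le_abs (sub_ne_zero.mpr hne)
      have h1 : (1 : ℝ) ≤ |(m : ℝ) - (m' : ℝ)| := by exact_mod_cast h2
      linarith
    have hvolA : volume A = ⊤ := by
      have h1 : (⋃ m : ℕ, Metric.ball (c m) (1/2)) ⊆ A := iUnion_subset hballs
      have h2 : volume (⋃ m : ℕ, Metric.ball (c m) (1/2)) =
          ∑' m : ℕ, volume (Metric.ball (c m) (1/2)) :=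
        measure_iUnion hdisj fun m => measurableSet_ball
      have h3 : ∀ m : ℕ, volume (Metric.ball (c m) (1/2)) =
          volume (Metric.ball (0 : Fin n → ℝ) (1/2)) := fun m =>
        Measure.addHaar_ball_center volume (c m) (1/2)
      have h4 : volume (Metric.ball (0 : Fin n → ℝ) (1/2)) ≠ 0 :=
        (Metric.measure_ball_pos volume 0 (by norm_num)).ne'
      have h5 : volume (⋃ m : ℕ, Metric.ball (c m) (1/2)) = ⊤ := by
        rw [h2]
        simp_rw [h3]
        exact ENNReal.tsum_const_eq_top_of_ne_zero h4
      exact top_le_iff.mp (h5 ▸ measure_mono h1)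
    -- contradiction with finiteness of the integral
    have hfin := hint.2
    rw [hasFiniteIntegral_def] at hfin
    have hlow : ENNReal.ofReal (Real.exp (-C)) * volume A ≤
        ∫⁻ t, ‖Real.exp (-(h t))‖₊ ∂volume := by
      calc ENNReal.ofReal (Real.exp (-C)) * volume A
          = ∫⁻ _ in A, ENNReal.ofReal (Real.exp (-C)) ∂volume := by
            rw [setLIntegral_const, mul_comm]
        _ ≤ ∫⁻ t in A, ‖Real.exp (-(h t))‖₊ ∂volume := by
            refine setLIntegral_mono' hAclosed.measurableSet fun t ht => ?_
            change _ ≤ ‖Real.exp (-(h t))‖ₑ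
            rw [Real.enorm_eq_ofReal (Real.exp_pos _).le]
            exact ENNReal.ofReal_le_ofReal (Real.exp_le_exp.mpr (by
              simp only [hA, mem_setOf_eq] at ht; linarith))
        _ ≤ ∫⁻ t, ‖Real.exp (-(h t))‖₊ ∂volume := setLIntegral_le_lintegral _ _
    rw [hvolA, ENNReal.mul_top (by
      simp [ENNReal.ofReal_eq_zero, not_le, Real.exp_pos])] at hlow
    rw [top_le_iff.mp (show ⊤ ≤ ∫⁻ t, ‖Real.exp (-(h t))‖ₑ ∂volume from hlow)] at hfin
    exact hfin.ne rfl
  · -- positive → integrable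
    intro hpos
    -- uniform lower bound c ‖t‖ ≤ h t
    obtain ⟨cc, hcc0, hcclow⟩ : ∃ cc : ℝ, 0 < cc ∧ ∀ t : Fin n → ℝ, cc * ‖t‖ ≤ h t := by
      rcases (Metric.sphere (0 : Fin n → ℝ) 1).eq_empty_or_nonempty with hS | hS
      · refine ⟨1, one_pos, fun t => ?_⟩
        rcases eq_or_ne t 0 with rfl | htne
        · simp [h0]
        · exfalso
          have : ‖t‖⁻¹ • t ∈ Metric.sphere (0 : Fin n → ℝ) 1 := by
            simp [norm_smul, abs_of_pos (inv_pos.mpr (norm_pos_iff.mpr htne)),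
              inv_mul_cancel₀ (norm_pos_iff.mpr htne).ne']
          rw [hS] at this
          exact this
      · obtain ⟨u, huS, humin⟩ := (isCompact_sphere (0 : Fin n → ℝ) 1).exists_isMinOn hS
          hcont.continuousOn
        have hu1 : ‖u‖ = 1 := by simpa using huS
        have hune : u ≠ 0 := fun hh => by simp [hh] at hu1
        refine ⟨h u, hpos u hune, fun t => ?_⟩
        rcases eq_or_ne t 0 with rfl | htne
        · simp [h0]
        · have htn : 0 < ‖t‖ := norm_pos_iff.mpr htne
          have hmem : ‖t‖⁻¹ • t ∈ Metric.sphere (0 : Fin n → ℝ) 1 := by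
            simp [norm_smul, abs_of_pos (inv_pos.mpr htn), inv_mul_cancel₀ htn.ne']
          have h1 : h u ≤ h (‖t‖⁻¹ • t) := humin hmem
          have h2 : h (‖t‖⁻¹ • t) ≤ ‖t‖⁻¹ * h t := hsmul _ t (inv_pos.mpr htn).le
          have h3 : h u ≤ ‖t‖⁻¹ * h t := le_trans h1 h2
          calc h u * ‖t‖ = ‖t‖ * h u := mul_comm _ _
            _ ≤ ‖t‖ * (‖t‖⁻¹ * h t) := mul_le_mul_of_nonneg_left h3 htn.le
            _ = h t := by field_simp
    set c' : ℝ := cc / ((n : ℝ) + 1) with hc'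
    have hc'0 : 0 < c' := div_pos hcc0 (by positivity)
    have hg : Integrable (fun t : Fin n → ℝ => ∏ i, Real.exp (-(c' * |t i|))) volume :=
      Integrable.fintype_prod (𝕜 := ℝ) fun _ => aux_exp_abs_integrable hc'0
    refine Integrable.mono' hg ?_ ?_
    · exact (Real.continuous_exp.comp hcont.neg).aestronglyMeasurable
    · refine Filter.Eventually.of_forall fun t => ?_
      rw [Real.norm_eq_abs, abs_of_pos (Real.exp_pos _)]
      have hsum : ∑ i, |t i| ≤ ((n : ℝ) + 1) * ‖t‖ := by
        calc ∑ i, |t i| ≤ ∑ _i : Fin n, ‖t‖ :=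
              Finset.sum_le_sum fun i _ => norm_le_pi_norm t i
          _ = (n : ℝ) * ‖t‖ := by simp
          _ ≤ ((n : ℝ) + 1) * ‖t‖ := by nlinarith [norm_nonneg t]
      have key : c' * ∑ i, |t i| ≤ h t := by
        have h1 : c' * ∑ i, |t i| ≤ c' * (((n : ℝ) + 1) * ‖t‖) :=
          mul_le_mul_of_nonneg_left hsum hc'0.le
        have h2 : c' * (((n : ℝ) + 1) * ‖t‖) = cc * ‖t‖ := by
          rw [hc']; field_simp
        rw [h2] at h1
        exact le_trans h1 (hcclow t)
      calc Real.exp (-(h t)) ≤ Real.exp (-(c' * ∑ i, |t i|)) :=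
            Real.exp_le_exp.mpr (by linarith)
        _ = ∏ i, Real.exp (-(c' * |t i|)) := by
            rw [← Real.exp_sum]
            congr 1
            rw [Finset.mul_sum, ← Finset.sum_neg_distrib]
end
end

section
/- Let $u$ be a subharmonic function on $\mathbb{C}$ with Riesz measure $\mu$ of finite total mass, representable as $u(z) = \int_{\mathbb{C}} \log|z - w|\, d\mu(w) + J_2(z)$ where the support of the portion of $\mu$ inside a disk $D_R$ has mass $s_1 > 2$ and the portion outside $D_R$ has mass $s_2 < 1$. Then $\int_{|z|>2R} e^{-u(z)}\, dA(z) < \infty$, where $dA$ is Lebesgue area measure. -/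
open MeasureTheory Set Metric

noncomputable section

/-- A subharmonic function on `ℂ`: upper semicontinuous and satisfying the
sub-mean value inequality on circles. -/
def SubMeanCirc (u : ℂ → ℝ) : Prop :=
  UpperSemicontinuous u ∧ ∀ (z : ℂ) (r : ℝ),
    u z ≤ (2 * Real.pi)⁻¹ *
      ∫ θ in (0:ℝ)..(2 * Real.pi), u (z + (r : ℂ) * Complex.exp ((θ : ℂ) * Complex.I))

open ENNReal

lemma aux_id {s r : ℝ} (hr : 0 < r) (n : ℕ) :
    (r / 2 ^ (n+1)) ^ (-s) * ((r / 2 ^ n) ^ (2:ℕ) * Real.pi) =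
      r ^ (2 - s) * (2 ^ s * Real.pi) * ((2:ℝ) ^ (s-2)) ^ n := by
  have half : ∀ x : ℝ, 0 ≤ x → (x / 2) ^ (-s) = x ^ (-s) * 2 ^ s := fun x hx => by
    rw [Real.div_rpow hx two_pos.le, div_eq_mul_inv, ← Real.rpow_neg two_pos.le, neg_neg]
  have e3 : (2:ℝ) ^ (s-2) = 2 ^ s / 4 := by
    rw [Real.rpow_sub two_pos, show ((2:ℝ)^(2:ℝ)) = 4 by
      rw [show (2:ℝ) = ((2:ℕ):ℝ) by norm_num, Real.rpow_natCast]; norm_num]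
  induction n with
  | zero =>
    have h2 : r ^ (-s) * (r:ℝ) ^ (2:ℕ) = r ^ (2 - s) := by
      rw [← Real.rpow_natCast r 2, ← Real.rpow_add hr]
      norm_num
      congr 1
      ring
    rw [show r / 2 ^ (0+1) = r / 2 by norm_num, half r hr.le]
    simp only [pow_zero, div_one, mul_one]
    linear_combination 2 ^ s * Real.pi * h2
  | succ m ih =>
    have e1 : r / 2 ^ (m+1+1) = (r / 2 ^ (m+1)) / 2 := by ring
    rw [e1, half _ (by positivity), pow_succ ((2:ℝ)^(s-2)) m, e3]
    have e2 : ((r / 2 ^ (m+1)) : ℝ) ^ (2:ℕ) = (r / 2 ^ m) ^ (2:ℕ) / 4 := by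
      rw [show (2:ℝ) ^ (m+1) = 2^m * 2 from pow_succ 2 m]
      field_simp
      ring
    rw [e2, e3] at *
    linear_combination 2 ^ s / 4 * ih

lemma lintegral_ball_rpow_neg {s : ℝ} (hs0 : 0 ≤ s) (hs2 : s < 2) {r : ℝ} (hr : 0 < r) :
    ∫⁻ y in ball (0:ℂ) r, ENNReal.ofReal (‖y‖ ^ (-s)) ≤
      ENNReal.ofReal (r ^ (2 - s)) *
        (ENNReal.ofReal (2 ^ s * Real.pi) * (1 - ENNReal.ofReal (2 ^ (s - 2)))⁻¹) := by
  set A : ℕ → Set ℂ := fun n => {y | r / 2 ^ (n+1) ≤ ‖y‖ ∧ ‖y‖ < r / 2 ^ n} with hA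
  have hsub : ball (0:ℂ) r \ {0} ⊆ ⋃ n, A n := by
    rintro y ⟨hy1, hy2⟩
    rw [mem_ball_zero_iff] at hy1
    have hy0 : 0 < ‖y‖ := by simpa [norm_pos_iff] using hy2
    have hex : ∃ m : ℕ, r ≤ ‖y‖ * 2 ^ (m+1) := by
      obtain ⟨m, hm⟩ := pow_unbounded_of_one_lt (r / ‖y‖) (one_lt_two (α := ℝ))
      refine ⟨m, ?_⟩
      have h1 : r / ‖y‖ ≤ 2 ^ (m+1) := hm.le.trans (pow_le_pow_right₀ one_le_two (Nat.le_succ m))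
      calc r = r / ‖y‖ * ‖y‖ := by rw [div_mul_cancel₀ _ hy0.ne']
        _ ≤ 2 ^ (m+1) * ‖y‖ := by gcongr
        _ = ‖y‖ * 2 ^ (m+1) := mul_comm _ _
    obtain ⟨n, h1, h2⟩ : ∃ n : ℕ, r ≤ ‖y‖ * 2 ^ (n+1) ∧ ‖y‖ * 2 ^ n < r := by
      refine ⟨Nat.find hex, Nat.find_spec hex, ?_⟩
      rcases h : Nat.find hex with _ | m
      · simpa using hy1
      · have := Nat.find_min hex (m := m) (h ▸ m.lt_succ_self)
        push_neg at this
        exact this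
    refine mem_iUnion.mpr ⟨n, ?_, ?_⟩
    · rw [div_le_iff₀ (by positivity)]; linarith
    · rw [lt_div_iff₀ (by positivity)]; linarith
  have hAball : ∀ n, A n ⊆ ball (0:ℂ) (r / 2 ^ n) := fun n y hy => by
    rw [mem_ball_zero_iff]; exact hy.2
  have hAmeas : ∀ n, MeasurableSet (A n) := fun n => by
    apply MeasurableSet.inter
    · exact measurableSet_le measurable_const measurable_norm
    · exact measurableSet_lt measurable_norm measurable_const
  have key : ∀ n : ℕ, ∫⁻ y in A n, ENNReal.ofReal (‖y‖ ^ (-s)) ≤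
      ENNReal.ofReal (r ^ (2 - s) * (2 ^ s * Real.pi)) * ENNReal.ofReal (2 ^ (s-2)) ^ n := by
    intro n
    have hb : ∀ y ∈ A n, ENNReal.ofReal (‖y‖ ^ (-s)) ≤
        ENNReal.ofReal ((r / 2 ^ (n+1)) ^ (-s)) := by
      intro y hy
      apply ENNReal.ofReal_le_ofReal
      have h0 : (0:ℝ) < r / 2 ^ (n+1) := by positivity
      rw [Real.rpow_neg (by positivity), Real.rpow_neg h0.le]
      apply inv_anti₀ (Real.rpow_pos_of_pos h0 _)
      exact Real.rpow_le_rpow h0.le hy.1 hs0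
    calc ∫⁻ y in A n, ENNReal.ofReal (‖y‖ ^ (-s))
        ≤ ∫⁻ _ in A n, ENNReal.ofReal ((r / 2 ^ (n+1)) ^ (-s)) :=
          setLIntegral_mono' (hAmeas n) hb
      _ = ENNReal.ofReal ((r / 2 ^ (n+1)) ^ (-s)) * volume (A n) := setLIntegral_const _ _
      _ ≤ ENNReal.ofReal ((r / 2 ^ (n+1)) ^ (-s)) * volume (ball (0:ℂ) (r / 2 ^ n)) := by
          gcongr; exact hAball n
      _ = ENNReal.ofReal ((r / 2 ^ (n+1)) ^ (-s)) *
            (ENNReal.ofReal (r / 2 ^ n) ^ 2 * NNReal.pi) := by rw [Complex.volume_ball]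
      _ = ENNReal.ofReal ((r / 2 ^ (n+1)) ^ (-s) * ((r / 2 ^ n) ^ (2:ℕ) * Real.pi)) := by
          rw [ENNReal.ofReal_mul (by positivity), ENNReal.ofReal_mul (by positivity),
            ENNReal.ofReal_pow (by positivity), ← NNReal.coe_real_pi,
            ENNReal.ofReal_coe_nnreal]
      _ = ENNReal.ofReal (r ^ (2 - s) * (2 ^ s * Real.pi)) * ENNReal.ofReal (2 ^ (s-2)) ^ n := by
          rw [← ENNReal.ofReal_pow (by positivity), ← ENNReal.ofReal_mul (by positivity)]
          congr 1
          exact aux_id hr n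
  calc ∫⁻ y in ball (0:ℂ) r, ENNReal.ofReal (‖y‖ ^ (-s))
      = ∫⁻ y in ball (0:ℂ) r \ {0}, ENNReal.ofReal (‖y‖ ^ (-s)) := by
        refine (setLIntegral_congr ?_).symm
        exact diff_ae_eq_self.mpr (measure_mono_null inter_subset_right (measure_singleton 0))
    _ ≤ ∫⁻ y in ⋃ n, A n, ENNReal.ofReal (‖y‖ ^ (-s)) := lintegral_mono_set hsub
    _ ≤ ∑' n, ∫⁻ y in A n, ENNReal.ofReal (‖y‖ ^ (-s)) := lintegral_iUnion_le _ _
    _ ≤ ∑' n, ENNReal.ofReal (r ^ (2 - s) * (2 ^ s * Real.pi)) * ENNReal.ofReal (2 ^ (s-2)) ^ n :=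
        ENNReal.tsum_le_tsum key
    _ = ENNReal.ofReal (r ^ (2 - s) * (2 ^ s * Real.pi)) * (1 - ENNReal.ofReal (2 ^ (s-2)))⁻¹ := by
        rw [ENNReal.tsum_mul_left, ENNReal.tsum_geometric]
    _ = _ := by rw [ENNReal.ofReal_mul (by positivity), mul_assoc]

lemma rpow_neg_anti {a b s : ℝ} (ha : 0 < a) (hab : a ≤ b) (hs : 0 ≤ s) :
    b ^ (-s) ≤ a ^ (-s) := by
  rw [Real.rpow_neg ha.le, Real.rpow_neg (ha.trans_le hab).le]
  exact inv_anti₀ (Real.rpow_pos_of_pos ha _) (Real.rpow_le_rpow ha.le hab hs)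

lemma lintegral_far {s R : ℝ} (hs : 2 < s) (hR : 0 < R) :
    ∫⁻ z in {z : ℂ | 2 * R < ‖z‖}, ENNReal.ofReal ((‖z‖ / 2) ^ (-s)) < ∞ := by
  set c : ℝ := R / (1 + 2 * R) with hc
  have hc0 : 0 < c := by positivity
  have hmeas : MeasurableSet {z : ℂ | 2 * R < ‖z‖} :=
    measurableSet_lt measurable_const measurable_norm
  have hpt : ∀ z : ℂ, z ∈ {z : ℂ | 2 * R < ‖z‖} →
      ENNReal.ofReal ((‖z‖ / 2) ^ (-s)) ≤
        ENNReal.ofReal (c ^ (-s)) * ENNReal.ofReal ((1 + ‖z‖) ^ (-s)) := by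
    intro z hz
    rw [← ENNReal.ofReal_mul (by positivity)]
    apply ENNReal.ofReal_le_ofReal
    have hz' : 2 * R < ‖z‖ := hz
    have hle : c * (1 + ‖z‖) ≤ ‖z‖ / 2 := by
      rw [hc, div_mul_eq_mul_div, div_le_div_iff₀ (by positivity) two_pos]
      nlinarith [norm_nonneg z]
    calc (‖z‖ / 2) ^ (-s) ≤ (c * (1 + ‖z‖)) ^ (-s) :=
          rpow_neg_anti (by positivity) hle (by linarith)
      _ = c ^ (-s) * (1 + ‖z‖) ^ (-s) := Real.mul_rpow hc0.le (by positivity)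
  calc ∫⁻ z in {z : ℂ | 2 * R < ‖z‖}, ENNReal.ofReal ((‖z‖ / 2) ^ (-s))
      ≤ ∫⁻ z in {z : ℂ | 2 * R < ‖z‖},
          ENNReal.ofReal (c ^ (-s)) * ENNReal.ofReal ((1 + ‖z‖) ^ (-s)) :=
        setLIntegral_mono' hmeas hpt
    _ ≤ ∫⁻ z : ℂ, ENNReal.ofReal (c ^ (-s)) * ENNReal.ofReal ((1 + ‖z‖) ^ (-s)) :=
        setLIntegral_le_lintegral _ _
    _ = ENNReal.ofReal (c ^ (-s)) * ∫⁻ z : ℂ, ENNReal.ofReal ((1 + ‖z‖) ^ (-s)) :=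
        lintegral_const_mul' _ _ ENNReal.ofReal_ne_top
    _ < ∞ := by
        apply ENNReal.mul_lt_top ENNReal.ofReal_lt_top
        have : (Module.finrank ℝ ℂ : ℝ) < s := by
          rw [Complex.finrank_real_complex]; exact_mod_cast hs
        exact finite_integral_one_add_norm this

lemma lintegral_ball_translate {s ρ : ℝ} (w : ℂ) :
    ∫⁻ z in ball w ρ, ENNReal.ofReal (‖z - w‖ ^ (-s)) =
      ∫⁻ y in ball (0:ℂ) ρ, ENNReal.ofReal (‖y‖ ^ (-s)) := by
  have mp : MeasurePreserving (fun x : ℂ => x + w) volume volume :=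
    measurePreserving_add_right volume w
  have emb : MeasurableEmbedding (fun x : ℂ => x + w) :=
    (MeasurableEquiv.addRight w).measurableEmbedding
  have h := mp.setLIntegral_comp_emb emb
    (fun z => ENNReal.ofReal (‖z - w‖ ^ (-s))) (ball (0:ℂ) ρ)
  have himg : (fun x : ℂ => x + w) '' ball (0:ℂ) ρ = ball w ρ := by
    ext x
    constructor
    · rintro ⟨y, hy, rfl⟩
      rw [mem_ball_zero_iff] at hy
      rw [mem_ball, dist_eq_norm]
      simpa using hy
    · intro hx
      refine ⟨x - w, ?_, by ring⟩
      rw [mem_ball, dist_eq_norm] at hx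
      rwa [mem_ball_zero_iff]
  rw [himg] at h
  rw [← h]
  simp


lemma inner_bound {s₁ s₂ R : ℝ} (hs1 : 2 < s₁) (hs20 : 0 ≤ s₂) (hs22 : s₂ < 2) (hR : 0 < R)
    {w : ℂ} (hw : R ≤ ‖w‖) :
    ∫⁻ z in {z : ℂ | 2 * R < ‖z‖},
        ENNReal.ofReal ((‖z‖ / 2) ^ (-s₁)) *
          ENNReal.ofReal (Real.exp (-s₂ * Real.log ‖1 - z / w‖)) ≤
      ENNReal.ofReal (2 ^ s₂) *
          (∫⁻ z in {z : ℂ | 2 * R < ‖z‖}, ENNReal.ofReal ((‖z‖ / 2) ^ (-s₁))) +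
        ENNReal.ofReal (4 ^ s₁ * 2 ^ (s₂ - 2) * R ^ (2 - s₁)) *
          (ENNReal.ofReal (2 ^ s₂ * Real.pi) * (1 - ENNReal.ofReal (2 ^ (s₂ - 2)))⁻¹) := by
  have hw0 : (0:ℝ) < ‖w‖ := hR.trans_le hw
  have hwne : w ≠ 0 := by simpa [norm_pos_iff] using hw0
  set S : Set ℂ := {z : ℂ | 2 * R < ‖z‖} with hS
  have hSmeas : MeasurableSet S := measurableSet_lt measurable_const measurable_norm
  set G : ℂ → ℝ≥0∞ := fun z =>
    ENNReal.ofReal ((‖z‖ / 2) ^ (-s₁)) * ENNReal.ofReal (‖w‖ ^ s₂ * ‖z - w‖ ^ (-s₂)) with hG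
  -- a.e. identification of the integrand with G
  have hae : ∀ᵐ z ∂(volume.restrict S),
      ENNReal.ofReal ((‖z‖ / 2) ^ (-s₁)) *
        ENNReal.ofReal (Real.exp (-s₂ * Real.log ‖1 - z / w‖)) = G z := by
    refine ae_restrict_of_ae ?_
    have hw' : ({w}ᶜ : Set ℂ) ∈ ae volume := by
      rw [mem_ae_iff]
      simp
    filter_upwards [hw'] with z hz
    have hzw : z ≠ w := hz
    have h1 : (1 : ℂ) - z / w = (w - z) / w := by field_simp
    have h2 : ‖(1:ℂ) - z / w‖ = ‖w - z‖ / ‖w‖ := by rw [h1, norm_div]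
    have h3 : (0:ℝ) < ‖w - z‖ := by
      rw [norm_pos_iff, sub_ne_zero]
      exact fun h => hzw h.symm
    have h4 : (0:ℝ) < ‖w - z‖ / ‖w‖ := by positivity
    congr 1
    rw [h2, show -s₂ * Real.log (‖w - z‖ / ‖w‖) = Real.log (‖w - z‖ / ‖w‖) * (-s₂) by ring,
      ← Real.rpow_def_of_pos h4, Real.div_rpow h3.le hw0.le, Real.rpow_neg hw0.le,
      div_eq_mul_inv, inv_inv, mul_comm, norm_sub_rev z w]
  rw [lintegral_congr_ae hae]
  -- split the domain
  set T : Set ℂ := {z : ℂ | ‖w‖ ≤ 2 * ‖z - w‖} with hT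
  have hTmeas : MeasurableSet T :=
    measurableSet_le measurable_const ((measurable_id.sub_const w).norm.const_mul 2)
  have hsplit : ∫⁻ z in S, G z ≤ (∫⁻ z in S ∩ T, G z) + ∫⁻ z in S \ T, G z := by
    calc ∫⁻ z in S, G z ≤ ∫⁻ z in (S ∩ T) ∪ (S \ T), G z := by
          apply lintegral_mono_set
          intro z hz
          by_cases h : z ∈ T
          · exact Or.inl ⟨hz, h⟩
          · exact Or.inr ⟨hz, h⟩
      _ ≤ _ := lintegral_union_le _ _ _
  refine hsplit.trans (add_le_add ?_ ?_)
  · -- far region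
    have hpt : ∀ z ∈ S ∩ T, G z ≤
        ENNReal.ofReal (2 ^ s₂) * ENNReal.ofReal ((‖z‖ / 2) ^ (-s₁)) := by
      rintro z ⟨hzS, hzT⟩
      have hzT' : ‖w‖ ≤ 2 * ‖z - w‖ := hzT
      have h3 : (0:ℝ) < ‖z - w‖ := by linarith
      have hle : ‖w‖ ^ s₂ * ‖z - w‖ ^ (-s₂) ≤ 2 ^ s₂ := by
        have e : ‖w‖ ^ s₂ * ‖z - w‖ ^ (-s₂) = (‖w‖ / ‖z - w‖) ^ s₂ := by
          rw [Real.div_rpow hw0.le h3.le, Real.rpow_neg h3.le, div_eq_mul_inv]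
        rw [e]
        exact Real.rpow_le_rpow (by positivity) (by rw [div_le_iff₀ h3]; linarith) hs20
      rw [hG, mul_comm (ENNReal.ofReal (2 ^ s₂))]
      exact mul_le_mul' le_rfl (ENNReal.ofReal_le_ofReal hle)
    calc ∫⁻ z in S ∩ T, G z
        ≤ ∫⁻ z in S ∩ T, ENNReal.ofReal (2 ^ s₂) * ENNReal.ofReal ((‖z‖ / 2) ^ (-s₁)) :=
          setLIntegral_mono' (hSmeas.inter hTmeas) hpt
      _ ≤ ∫⁻ z in S, ENNReal.ofReal (2 ^ s₂) * ENNReal.ofReal ((‖z‖ / 2) ^ (-s₁)) :=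
          lintegral_mono_set inter_subset_left
      _ = ENNReal.ofReal (2 ^ s₂) * ∫⁻ z in S, ENNReal.ofReal ((‖z‖ / 2) ^ (-s₁)) :=
          lintegral_const_mul' _ _ ENNReal.ofReal_ne_top
  · -- near region
    have hpt : ∀ z ∈ S \ T, G z ≤
        ENNReal.ofReal ((‖w‖ / 4) ^ (-s₁) * ‖w‖ ^ s₂) * ENNReal.ofReal (‖z - w‖ ^ (-s₂)) := by
      rintro z ⟨hzS, hzT⟩
      have h5 : 2 * ‖z - w‖ < ‖w‖ := by
        by_contra h
        exact hzT (by push_neg at h; exact h)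
      have h6 : ‖w‖ / 2 < ‖z‖ := by
        have h7 : ‖w‖ - ‖z‖ ≤ ‖w - z‖ := norm_sub_norm_le w z
        rw [norm_sub_rev w z] at h7
        linarith
      have h8 : (‖z‖ / 2) ^ (-s₁) ≤ (‖w‖ / 4) ^ (-s₁) :=
        rpow_neg_anti (by positivity) (by linarith) (by linarith)
      rw [hG]
      calc ENNReal.ofReal ((‖z‖ / 2) ^ (-s₁)) * ENNReal.ofReal (‖w‖ ^ s₂ * ‖z - w‖ ^ (-s₂))
          ≤ ENNReal.ofReal ((‖w‖ / 4) ^ (-s₁)) * ENNReal.ofReal (‖w‖ ^ s₂ * ‖z - w‖ ^ (-s₂)) :=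
            mul_le_mul' (ENNReal.ofReal_le_ofReal h8) le_rfl
        _ = ENNReal.ofReal ((‖w‖ / 4) ^ (-s₁) * ‖w‖ ^ s₂) * ENNReal.ofReal (‖z - w‖ ^ (-s₂)) := by
            rw [← ENNReal.ofReal_mul (by positivity), ← ENNReal.ofReal_mul (by positivity),
              mul_assoc]
    have hsub2 : S \ T ⊆ ball w (‖w‖ / 2) := by
      rintro z ⟨hzS, hzT⟩
      have h5 : 2 * ‖z - w‖ < ‖w‖ := by
        by_contra h
        exact hzT (by push_neg at h; exact h)
      rw [mem_ball, dist_eq_norm]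
      linarith
    have hreal : (‖w‖ / 4) ^ (-s₁) * ‖w‖ ^ s₂ * (‖w‖ / 2) ^ (2 - s₂) ≤
        4 ^ s₁ * 2 ^ (s₂ - 2) * R ^ (2 - s₁) := by
      have e1 : (‖w‖ / 4) ^ (-s₁) = ‖w‖ ^ (-s₁) * 4 ^ s₁ := by
        rw [Real.div_rpow hw0.le (by norm_num : (0:ℝ) ≤ 4),
          Real.rpow_neg (by norm_num : (0:ℝ) ≤ 4), div_eq_mul_inv, inv_inv]
      have e2 : (‖w‖ / 2) ^ (2 - s₂) = ‖w‖ ^ (2 - s₂) * 2 ^ (s₂ - 2) := by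
        rw [Real.div_rpow hw0.le two_pos.le, show (s₂ - 2 : ℝ) = -(2 - s₂) by ring,
          Real.rpow_neg two_pos.le, div_eq_mul_inv]
      have e3 : ‖w‖ ^ (-s₁) * ‖w‖ ^ s₂ * ‖w‖ ^ (2 - s₂) = ‖w‖ ^ (2 - s₁) := by
        rw [← Real.rpow_add hw0, ← Real.rpow_add hw0]
        congr 1
        ring
      have e4 : ‖w‖ ^ (2 - s₁) ≤ R ^ (2 - s₁) := by
        rw [show (2 - s₁ : ℝ) = -(s₁ - 2) by ring]
        exact rpow_neg_anti hR hw (by linarith)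
      have e5 : (‖w‖ / 4) ^ (-s₁) * ‖w‖ ^ s₂ * (‖w‖ / 2) ^ (2 - s₂) =
          4 ^ s₁ * 2 ^ (s₂ - 2) * ‖w‖ ^ (2 - s₁) := by
        rw [e1, e2]
        linear_combination (4:ℝ) ^ s₁ * 2 ^ (s₂ - 2) * e3
      rw [e5]
      have h9 : (0:ℝ) ≤ 4 ^ s₁ * 2 ^ (s₂ - 2) := by positivity
      exact mul_le_mul_of_nonneg_left e4 h9
    calc ∫⁻ z in S \ T, G z
        ≤ ∫⁻ z in S \ T,
            ENNReal.ofReal ((‖w‖ / 4) ^ (-s₁) * ‖w‖ ^ s₂) * ENNReal.ofReal (‖z - w‖ ^ (-s₂)) :=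
          setLIntegral_mono' (hSmeas.diff hTmeas) hpt
      _ ≤ ∫⁻ z in ball w (‖w‖ / 2),
            ENNReal.ofReal ((‖w‖ / 4) ^ (-s₁) * ‖w‖ ^ s₂) * ENNReal.ofReal (‖z - w‖ ^ (-s₂)) :=
          lintegral_mono_set hsub2
      _ = ENNReal.ofReal ((‖w‖ / 4) ^ (-s₁) * ‖w‖ ^ s₂) *
            ∫⁻ z in ball w (‖w‖ / 2), ENNReal.ofReal (‖z - w‖ ^ (-s₂)) :=
          lintegral_const_mul' _ _ ENNReal.ofReal_ne_top
      _ = ENNReal.ofReal ((‖w‖ / 4) ^ (-s₁) * ‖w‖ ^ s₂) *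
            ∫⁻ y in ball (0:ℂ) (‖w‖ / 2), ENNReal.ofReal (‖y‖ ^ (-s₂)) := by
          rw [lintegral_ball_translate]
      _ ≤ ENNReal.ofReal ((‖w‖ / 4) ^ (-s₁) * ‖w‖ ^ s₂) *
            (ENNReal.ofReal ((‖w‖ / 2) ^ (2 - s₂)) *
              (ENNReal.ofReal (2 ^ s₂ * Real.pi) * (1 - ENNReal.ofReal (2 ^ (s₂ - 2)))⁻¹)) := by
          gcongr
          exact lintegral_ball_rpow_neg hs20 hs22 (by positivity)
      _ ≤ ENNReal.ofReal (4 ^ s₁ * 2 ^ (s₂ - 2) * R ^ (2 - s₁)) *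
            (ENNReal.ofReal (2 ^ s₂ * Real.pi) * (1 - ENNReal.ofReal (2 ^ (s₂ - 2)))⁻¹) := by
          rw [← mul_assoc, ← ENNReal.ofReal_mul (by positivity)]
          refine mul_le_mul' (ENNReal.ofReal_le_ofReal ?_) le_rfl
          exact hreal

/-- if `u` is subharmonic with finite-mass Riesz measure `μ`,
`u(z) = ∫_{D_R} log|z-w| dμ(w) + ∫_{ℂ∖D_R} log|1-z/w| dμ(w)`, with
`μ(D_R) = s₁ > 2` and `μ(ℂ∖D_R) = s₂ < 1`, then `∫_{|z|>2R} e^{-u} dA < ∞`. -/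
theorem stmt1 (u : ℂ → ℝ) (hsub : SubMeanCirc u) (μ : Measure ℂ) [IsFiniteMeasure μ]
    (R : ℝ) (hR : 0 < R)
    (hs1 : 2 < (μ (ball (0:ℂ) R)).toReal)
    (hs2 : (μ (ball (0:ℂ) R)ᶜ).toReal < 1)
    (hrep : ∀ z : ℂ, u z = (∫ w in ball (0:ℂ) R, Real.log ‖z - w‖ ∂μ) +
      ∫ w in (ball (0:ℂ) R)ᶜ, Real.log ‖1 - z / w‖ ∂μ) :
    IntegrableOn (fun z => Real.exp (-(u z))) {z : ℂ | 2 * R < ‖z‖} volume := by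
  obtain ⟨husc, -⟩ := hsub
  have hum : Measurable u := husc.measurable
  set B : Set ℂ := ball (0:ℂ) R with hB
  set S : Set ℂ := {z : ℂ | 2 * R < ‖z‖} with hS
  have hSmeas : MeasurableSet S := measurableSet_lt measurable_const measurable_norm
  have hBmeas : MeasurableSet B := measurableSet_ball
  set s₁ : ℝ := (μ B).toReal with hs₁def
  set s₂ : ℝ := (μ Bᶜ).toReal with hs₂def
  -- lower bound for the first potential
  have hJ1 : ∀ z ∈ S, s₁ * Real.log (‖z‖ / 2) ≤ ∫ w in B, Real.log ‖z - w‖ ∂μ := by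
    intro z hz
    have hz' : 2 * R < ‖z‖ := hz
    have hz0 : 0 < ‖z‖ := by linarith
    have hlb : ∀ w ∈ B, Real.log (‖z‖ / 2) ≤ Real.log ‖z - w‖ := by
      intro w hw
      rw [hB, mem_ball_zero_iff] at hw
      have h1 : ‖z‖ / 2 ≤ ‖z - w‖ := by
        have h2 := norm_sub_norm_le z w
        linarith
      exact Real.log_le_log (by positivity) h1
    have hub : ∀ w ∈ B, Real.log ‖z - w‖ ≤ Real.log (‖z‖ + R) := by
      intro w hw
      rw [hB, mem_ball_zero_iff] at hw
      have h1 : ‖z - w‖ ≤ ‖z‖ + R := by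
        have h2 := norm_sub_le z w
        linarith
      have h3 : 0 < ‖z - w‖ → Real.log ‖z - w‖ ≤ Real.log (‖z‖ + R) := fun hp =>
        Real.log_le_log hp h1
      rcases eq_or_lt_of_le (norm_nonneg (z - w)) with h | h
      · exfalso
        have hzw : z = w := by rwa [eq_comm, norm_sub_eq_zero_iff] at h
        rw [hzw] at hz'
        linarith
      · exact h3 h
    have hmeas' : Measurable fun w : ℂ => Real.log ‖z - w‖ :=
      Real.measurable_log.comp (measurable_const.sub measurable_id).norm
    have hint : IntegrableOn (fun w => Real.log ‖z - w‖) B μ := by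
      refine ⟨hmeas'.aestronglyMeasurable.restrict, ?_⟩
      refine HasFiniteIntegral.of_bounded
        (C := |Real.log (‖z‖ / 2)| + |Real.log (‖z‖ + R)|) ?_
      filter_upwards [ae_restrict_mem hBmeas] with w hw
      have h1 := hlb w hw
      have h2 := hub w hw
      rw [Real.norm_eq_abs, abs_le]
      constructor
      · have := neg_abs_le (Real.log (‖z‖ / 2))
        have := abs_nonneg (Real.log (‖z‖ + R))
        linarith
      · have := le_abs_self (Real.log (‖z‖ + R))
        have := abs_nonneg (Real.log (‖z‖ / 2))
        linarith
    calc s₁ * Real.log (‖z‖ / 2) = ∫ _ in B, Real.log (‖z‖ / 2) ∂μ := by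
          rw [setIntegral_const, smul_eq_mul]; rfl
      _ ≤ ∫ w in B, Real.log ‖z - w‖ ∂μ :=
          setIntegral_mono_on (integrableOn_const (measure_ne_top μ B))
            hint hBmeas hlb
  -- pointwise exponential bound
  have hexp1 : ∀ z ∈ S, Real.exp (-(u z)) ≤
      (‖z‖ / 2) ^ (-s₁) * Real.exp (-(∫ w in Bᶜ, Real.log ‖1 - z / w‖ ∂μ)) := by
    intro z hz
    have hz' : 2 * R < ‖z‖ := hz
    have hz0 : (0:ℝ) < ‖z‖ / 2 := by linarith
    rw [hrep z, neg_add, Real.exp_add]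
    have h1 : (‖z‖ / 2) ^ (-s₁) = Real.exp (Real.log (‖z‖ / 2) * (-s₁)) :=
      Real.rpow_def_of_pos hz0 _
    rw [h1]
    have h2 := hJ1 z hz
    exact mul_le_mul_of_nonneg_right (Real.exp_le_exp.mpr (by nlinarith)) (Real.exp_pos _).le
  -- reduce to a lower Lebesgue integral
  refine ⟨(Real.measurable_exp.comp hum.neg).aestronglyMeasurable.restrict, ?_⟩
  rw [hasFiniteIntegral_iff_ofReal (Filter.Eventually.of_forall fun z => (Real.exp_pos _).le)]
  by_cases hBc : μ Bᶜ = 0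
  · -- no mass outside the disk
    have hb : ∀ z ∈ S, ENNReal.ofReal (Real.exp (-(u z))) ≤
        ENNReal.ofReal ((‖z‖ / 2) ^ (-s₁)) := by
      intro z hz
      apply ENNReal.ofReal_le_ofReal
      have h2 := hexp1 z hz
      have hJ2 : (∫ w in Bᶜ, Real.log ‖1 - z / w‖ ∂μ) = 0 := by
        rw [Measure.restrict_eq_zero.mpr hBc, integral_zero_measure]
      rw [hJ2] at h2
      simpa using h2
    exact lt_of_le_of_lt (setLIntegral_mono' hSmeas hb) (lintegral_far hs1 hR)
  · -- mass outside the disk: Jensen's inequality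
    have hs2pos : 0 < s₂ := ENNReal.toReal_pos hBc (measure_ne_top μ _)
    have hs22 : s₂ < 2 := by linarith
    set H : ℂ → ℝ≥0∞ := fun z =>
      ∫⁻ w in Bᶜ, ENNReal.ofReal (Real.exp (-s₂ * Real.log ‖1 - z / w‖)) ∂μ with hH
    have hJen : ∀ z : ℂ,
        ENNReal.ofReal (Real.exp (-(∫ w in Bᶜ, Real.log ‖1 - z / w‖ ∂μ))) ≤
          ENNReal.ofReal s₂⁻¹ * H z := by
      intro z
      by_cases hHz : H z = ∞
      · rw [hHz, ENNReal.mul_top (by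
          simp only [ne_eq, ENNReal.ofReal_eq_zero, not_le]
          positivity)]
        exact le_top
      · set ν : Measure ℂ := μ.restrict Bᶜ with hν
        haveI : NeZero ν := by
          refine ⟨fun h0 => hBc ?_⟩
          have := Measure.restrict_apply_univ (μ := μ) (s := Bᶜ)
          rw [← this, ← hν, h0]
          simp
        set f : ℂ → ℝ := fun w => Real.log ‖1 - z / w‖ with hf
        set g : ℝ → ℝ := fun t => Real.exp (-s₂ * t) with hg
        have hfmeas : Measurable f :=
          Real.measurable_log.comp (measurable_const.sub (measurable_const.div measurable_id)).norm
        have hgmeas : Measurable fun w => g (f w) :=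
          Real.measurable_exp.comp (hfmeas.const_mul _)
        have hgf_nonneg : 0 ≤ᵐ[ν] fun w => g (f w) :=
          Filter.Eventually.of_forall fun w => (Real.exp_pos _).le
        have hHz' : ∫⁻ w, ENNReal.ofReal (g (f w)) ∂ν = H z := rfl
        have hgfInt : Integrable (fun w => g (f w)) ν := by
          refine ⟨hgmeas.aestronglyMeasurable, ?_⟩
          rw [hasFiniteIntegral_iff_ofReal hgf_nonneg, hHz']
          exact Ne.lt_top hHz
        have hgp : ∀ w, 0 ≤ s₂⁻¹ * g (f w) := fun w => by positivity
        set M : ℝ := max 0 (Real.log (1 + ‖z‖ / R)) with hM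
        have hM0 : 0 ≤ M := le_max_left _ _
        have hfInt : Integrable f ν := by
          have hbound : ∀ᵐ w ∂ν, ‖f w‖ ≤ M + s₂⁻¹ * g (f w) := by
            filter_upwards [ae_restrict_mem hBmeas.compl] with w hw
            have hwR : R ≤ ‖w‖ := by
              rw [mem_compl_iff, hB, mem_ball_zero_iff] at hw
              exact not_lt.mp hw
            have hw0 : (0:ℝ) < ‖w‖ := hR.trans_le hwR
            have hub' : f w ≤ M := by
              have h1 : ‖(1:ℂ) - z / w‖ ≤ 1 + ‖z‖ / R := by
                calc ‖(1:ℂ) - z / w‖ ≤ ‖(1:ℂ)‖ + ‖z / w‖ := norm_sub_le _ _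
                  _ = 1 + ‖z‖ / ‖w‖ := by rw [norm_one, norm_div]
                  _ ≤ 1 + ‖z‖ / R := by gcongr
              rcases eq_or_lt_of_le (norm_nonneg ((1:ℂ) - z / w)) with h | h
              · have : f w = 0 := by rw [hf]; simp [← h, Real.log_zero]
                rw [this]; exact hM0
              · exact le_trans (Real.log_le_log h h1) (le_max_right _ _)
            have hlb' : -f w ≤ s₂⁻¹ * g (f w) := by
              have h1 := Real.add_one_le_exp (-s₂ * f w)
              have h2 : -s₂ * f w ≤ g (f w) := by rw [hg]; dsimp only; linarith
              have h3 : -f w = s₂⁻¹ * (-s₂ * f w) := by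
                field_simp
              rw [h3]
              exact mul_le_mul_of_nonneg_left h2 (by positivity)
            rw [Real.norm_eq_abs, abs_le]
            constructor
            · have := hgp w
              linarith
            · have h4 : 0 ≤ s₂⁻¹ * g (f w) := hgp w
              linarith
          exact Integrable.mono' ((integrable_const M).add (hgfInt.const_mul s₂⁻¹))
            hfmeas.aestronglyMeasurable hbound
        have hcvx : ConvexOn ℝ univ g := by
          have h := convexOn_exp.comp_affineMap (AffineMap.lineMap (0:ℝ) (-s₂))
          have e : (Real.exp ∘ ⇑(AffineMap.lineMap (0:ℝ) (-s₂))) = g := by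
            funext t
            simp [hg, AffineMap.lineMap_apply, smul_eq_mul, mul_comm]
          rw [e] at h
          simpa using h
        have hgc : ContinuousOn g univ :=
          (Real.continuous_exp.comp (continuous_const.mul continuous_id)).continuousOn
        have hJ := hcvx.map_average_le hgc isClosed_univ
          (Filter.Eventually.of_forall fun x => mem_univ _) hfInt hgfInt
        rw [average_eq, average_eq, measureReal_def, Measure.restrict_apply_univ] at hJ
        have hL : g (((μ Bᶜ).toReal)⁻¹ • ∫ w, f w ∂ν) =
            Real.exp (-(∫ w, f w ∂ν)) := by
          rw [hg]
          dsimp only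
          congr 1
          rw [smul_eq_mul, ← hs₂def]
          field_simp
        have hR2 : ∫ w, g (f w) ∂ν = (H z).toReal := by
          rw [integral_eq_lintegral_of_nonneg_ae hgf_nonneg hgmeas.aestronglyMeasurable, hHz']
        rw [hL, hR2, smul_eq_mul, ← hs₂def] at hJ
        calc ENNReal.ofReal (Real.exp (-(∫ w, f w ∂ν)))
            ≤ ENNReal.ofReal (s₂⁻¹ * (H z).toReal) := ENNReal.ofReal_le_ofReal hJ
          _ = ENNReal.ofReal s₂⁻¹ * ENNReal.ofReal ((H z).toReal) :=
              ENNReal.ofReal_mul (by positivity)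
          _ = ENNReal.ofReal s₂⁻¹ * H z := by rw [ENNReal.ofReal_toReal hHz]
    -- combine pointwise
    have hb : ∀ z ∈ S, ENNReal.ofReal (Real.exp (-(u z))) ≤
        ENNReal.ofReal s₂⁻¹ * (ENNReal.ofReal ((‖z‖ / 2) ^ (-s₁)) * H z) := by
      intro z hz
      calc ENNReal.ofReal (Real.exp (-(u z)))
          ≤ ENNReal.ofReal ((‖z‖ / 2) ^ (-s₁) *
              Real.exp (-(∫ w in Bᶜ, Real.log ‖1 - z / w‖ ∂μ))) :=
            ENNReal.ofReal_le_ofReal (hexp1 z hz)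
        _ = ENNReal.ofReal ((‖z‖ / 2) ^ (-s₁)) *
              ENNReal.ofReal (Real.exp (-(∫ w in Bᶜ, Real.log ‖1 - z / w‖ ∂μ))) :=
            ENNReal.ofReal_mul (by positivity)
        _ ≤ ENNReal.ofReal ((‖z‖ / 2) ^ (-s₁)) * (ENNReal.ofReal s₂⁻¹ * H z) :=
            mul_le_mul' le_rfl (hJen z)
        _ = ENNReal.ofReal s₂⁻¹ * (ENNReal.ofReal ((‖z‖ / 2) ^ (-s₁)) * H z) := by ring
    have big : ∫⁻ z in S, ENNReal.ofReal (Real.exp (-(u z))) ≤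
        ENNReal.ofReal s₂⁻¹ * ∫⁻ z in S, ENNReal.ofReal ((‖z‖ / 2) ^ (-s₁)) * H z :=
      (setLIntegral_mono' hSmeas hb).trans_eq
        (lintegral_const_mul' _ _ ENNReal.ofReal_ne_top)
    refine lt_of_le_of_lt big (ENNReal.mul_lt_top ENNReal.ofReal_lt_top ?_)
    -- Tonelli
    have hFmeas : Measurable (fun p : ℂ × ℂ =>
        ENNReal.ofReal ((‖p.1‖ / 2) ^ (-s₁)) *
          ENNReal.ofReal (Real.exp (-s₂ * Real.log ‖1 - p.1 / p.2‖))) := by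
      apply Measurable.mul (f := fun p : ℂ × ℂ => ENNReal.ofReal ((‖p.1‖ / 2) ^ (-s₁)))
        (g := fun p : ℂ × ℂ => ENNReal.ofReal (Real.exp (-s₂ * Real.log ‖1 - p.1 / p.2‖)))
      · fun_prop
      · exact ENNReal.measurable_ofReal.comp (Real.measurable_exp.comp ((Real.measurable_log.comp
          ((measurable_const.sub (measurable_fst.div measurable_snd)).norm)).const_mul (-s₂)))
    have e : ∫⁻ z in S, ENNReal.ofReal ((‖z‖ / 2) ^ (-s₁)) * H z =
        ∫⁻ w in Bᶜ, (∫⁻ z in S, ENNReal.ofReal ((‖z‖ / 2) ^ (-s₁)) *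
          ENNReal.ofReal (Real.exp (-s₂ * Real.log ‖1 - z / w‖))) ∂μ := by
      calc ∫⁻ z in S, ENNReal.ofReal ((‖z‖ / 2) ^ (-s₁)) * H z
          = ∫⁻ z in S, ∫⁻ w in Bᶜ, ENNReal.ofReal ((‖z‖ / 2) ^ (-s₁)) *
              ENNReal.ofReal (Real.exp (-s₂ * Real.log ‖1 - z / w‖)) ∂μ := by
            refine lintegral_congr fun z => ?_
            rw [hH]
            exact (lintegral_const_mul' _ _ ENNReal.ofReal_ne_top).symm
        _ = _ := lintegral_lintegral_swap hFmeas.aemeasurable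
    rw [e]
    set C : ℝ≥0∞ := ENNReal.ofReal (2 ^ s₂) *
        (∫⁻ z in {z : ℂ | 2 * R < ‖z‖}, ENNReal.ofReal ((‖z‖ / 2) ^ (-s₁))) +
      ENNReal.ofReal (4 ^ s₁ * 2 ^ (s₂ - 2) * R ^ (2 - s₁)) *
        (ENNReal.ofReal (2 ^ s₂ * Real.pi) * (1 - ENNReal.ofReal (2 ^ (s₂ - 2)))⁻¹) with hC
    have hCfin : C < ∞ := by
      rw [hC]
      apply ENNReal.add_lt_top.mpr
      constructor
      · exact ENNReal.mul_lt_top ENNReal.ofReal_lt_top (lintegral_far hs1 hR)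
      · refine ENNReal.mul_lt_top ENNReal.ofReal_lt_top
          (ENNReal.mul_lt_top ENNReal.ofReal_lt_top ?_)
        rw [ENNReal.inv_lt_top]
        rw [tsub_pos_iff_lt]
        exact ENNReal.ofReal_lt_one.mpr
          (Real.rpow_lt_one_of_one_lt_of_neg one_lt_two (by linarith))
    calc ∫⁻ w in Bᶜ, (∫⁻ z in S, ENNReal.ofReal ((‖z‖ / 2) ^ (-s₁)) *
          ENNReal.ofReal (Real.exp (-s₂ * Real.log ‖1 - z / w‖))) ∂μ
        ≤ ∫⁻ _ in Bᶜ, C ∂μ := by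
          refine setLIntegral_mono' hBmeas.compl fun w hw => ?_
          have hwR : R ≤ ‖w‖ := by
            rw [mem_compl_iff, hB, mem_ball_zero_iff] at hw
            exact not_lt.mp hw
          exact inner_bound hs1 hs2pos.le hs22 hR hwR
      _ = C * μ Bᶜ := setLIntegral_const _ _
      _ < ∞ := ENNReal.mul_lt_top hCfin (measure_lt_top μ _)
end
end

section
/- Let $P(z_1, z_2) = z_1^2 z_2 (z_2^2 - 1)$ on $\mathbb{C}^2$. Then the set $\{z \in \mathbb{C}^2 : |P(z)| \le 1\}$ has finite Lebesgue volume, and for every $c > 1/2$, $\int_{\mathbb{C}^2} \max\{|P(z)|, 1\}^{-2c}\, dV < \infty$, while for $c \le 1/2$ the integral diverges; hence $\hat c_\infty(P) = 1/2$. -/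
open MeasureTheory Set

noncomputable section

open Metric ENNReal

namespace Stmt5Aux

lemma lintegral_comp_smul' (g : ℂ → ℝ≥0∞) {R : ℝ} (hR : 0 < R) :
    ∫⁻ x : ℂ, g (R • x) = ENNReal.ofReal ((R ^ 2)⁻¹) * ∫⁻ x : ℂ, g x := by
  have hR0 : R ≠ 0 := hR.ne'
  let e : ℂ ≃ᵐ ℂ := (Homeomorph.smul (isUnit_iff_ne_zero.2 hR0).unit).toMeasurableEquiv
  calc ∫⁻ x : ℂ, g (R • x)
      = ∫⁻ y, g y ∂(Measure.map (fun x : ℂ => R • x) volume) :=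
        (MeasureTheory.lintegral_map_equiv g e).symm
    _ = ENNReal.ofReal ((R ^ 2)⁻¹) * ∫⁻ x : ℂ, g x := by
        rw [Measure.map_addHaar_smul volume hR0, Complex.finrank_real_complex,
          lintegral_smul_measure, abs_of_nonneg (by positivity), smul_eq_mul]

lemma finK {c : ℝ} (hc : 1/2 < c) :
    ∫⁻ u : ℂ, ENNReal.ofReal ((max (‖u‖^2) 1) ^ (-(2*c))) < ⊤ := by
  have hpt : ∀ u : ℂ, (max (‖u‖^2) 1 : ℝ) ^ (-(2*c)) ≤ (2:ℝ)^(4*c) * (1+‖u‖)^(-(4*c)) := by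
    intro u
    have hn : 0 ≤ ‖u‖ := norm_nonneg u
    have h1 : ((1+‖u‖)/2)^2 ≤ max (‖u‖^2) 1 := by
      rcases le_total ‖u‖ 1 with h | h
      · have hm : max (‖u‖^2) 1 = 1 := max_eq_right (by nlinarith)
        rw [hm]; nlinarith
      · have hm : max (‖u‖^2) 1 = ‖u‖^2 := max_eq_left (by nlinarith)
        rw [hm]; nlinarith
    have hpos : (0:ℝ) < ((1+‖u‖)/2)^2 := by positivity
    have h2 : (max (‖u‖^2) 1) ^ (-(2*c)) ≤ (((1+‖u‖)/2)^2) ^ (-(2*c)) :=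
      Real.rpow_le_rpow_of_nonpos hpos h1 (by linarith)
    have h3 : ((((1+‖u‖)/2:ℝ))^2) ^ (-(2*c)) = ((1+‖u‖)/2) ^ (-(4*c)) := by
      rw [← Real.rpow_natCast ((1+‖u‖)/2) 2, ← Real.rpow_mul (by positivity)]
      norm_num
      ring_nf
    have h4 : (((1+‖u‖)/2:ℝ)) ^ (-(4*c)) = (2:ℝ)^(4*c) * (1+‖u‖)^(-(4*c)) := by
      rw [Real.div_rpow (by positivity) (by norm_num), Real.rpow_neg (by norm_num : (0:ℝ) ≤ 2)]
      rw [div_eq_mul_inv, inv_inv]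
      ring
    calc (max (‖u‖^2) 1 : ℝ) ^ (-(2*c)) ≤ (((1+‖u‖)/2)^2) ^ (-(2*c)) := h2
      _ = (2:ℝ)^(4*c) * (1+‖u‖)^(-(4*c)) := by rw [h3, h4]
  calc ∫⁻ u : ℂ, ENNReal.ofReal ((max (‖u‖^2) 1) ^ (-(2*c)))
      ≤ ∫⁻ u : ℂ, ENNReal.ofReal ((2:ℝ)^(4*c) * (1+‖u‖)^(-(4*c))) :=
        lintegral_mono fun u => ENNReal.ofReal_le_ofReal (hpt u)
    _ = ENNReal.ofReal ((2:ℝ)^(4*c)) * ∫⁻ u : ℂ, ENNReal.ofReal ((1+‖u‖)^(-(4*c))) := by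
        simp_rw [ENNReal.ofReal_mul (Real.rpow_nonneg (by norm_num : (0:ℝ) ≤ 2) (4*c))]
        exact lintegral_const_mul' _ _ ENNReal.ofReal_ne_top
    _ < ⊤ := by
        apply ENNReal.mul_lt_top ENNReal.ofReal_lt_top
        apply finite_integral_one_add_norm
        rw [Complex.finrank_real_complex]
        norm_num
        linarith

lemma lint_inv_norm_ball :
    ∫⁻ x : ℂ in Metric.ball 0 1, (ENNReal.ofReal ‖x‖)⁻¹ < ⊤ := by
  set v : ℝ≥0∞ := volume (Metric.ball (0:ℂ) 1) with hv
  have hvlt : v < ⊤ := measure_ball_lt_top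
  set A : ℕ → Set ℂ := fun n => Metric.ball 0 ((2:ℝ)⁻¹ ^ n) \ Metric.ball 0 ((2:ℝ)⁻¹ ^ (n+1))
    with hA
  have hcover : Metric.ball (0:ℂ) 1 ⊆ {0} ∪ ⋃ n, A n := by
    intro x hx
    rcases eq_or_ne x 0 with rfl | hx0
    · exact Or.inl rfl
    right
    have hxn : 0 < ‖x‖ := norm_pos_iff.2 hx0
    have hx1 : ‖x‖ < 1 := by simpa [mem_ball_zero_iff] using hx
    have hex : ∃ n : ℕ, (2:ℝ)⁻¹ ^ (n+1) ≤ ‖x‖ := by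
      obtain ⟨n, hn⟩ := exists_pow_lt_of_lt_one hxn (by norm_num : (2:ℝ)⁻¹ < 1)
      refine ⟨n, le_trans ?_ hn.le⟩
      exact pow_le_pow_of_le_one (by norm_num) (by norm_num) (Nat.le_succ n)
    have hN1 : (2:ℝ)⁻¹ ^ (Nat.find hex + 1) ≤ ‖x‖ := Nat.find_spec hex
    have hN2 : ‖x‖ < (2:ℝ)⁻¹ ^ (Nat.find hex) := by
      by_contra hcon
      push_neg at hcon
      have hN0 : Nat.find hex ≠ 0 := by
        intro h0
        rw [h0] at hcon
        simp only [pow_zero] at hcon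
        linarith
      obtain ⟨m, hm⟩ := Nat.exists_eq_succ_of_ne_zero hN0
      have hmin : ¬ ((2:ℝ)⁻¹ ^ (m+1) ≤ ‖x‖) := Nat.find_min hex (by omega)
      rw [hm] at hcon
      exact hmin hcon
    refine mem_iUnion.2 ⟨Nat.find hex, ?_, ?_⟩
    · exact mem_ball_zero_iff.2 hN2
    · simp only [mem_ball_zero_iff, not_lt]
      exact hN1
  have hterm : ∀ n : ℕ, ∫⁻ x : ℂ in A n, (ENNReal.ofReal ‖x‖)⁻¹
      ≤ ENNReal.ofReal (2 * (2:ℝ)⁻¹ ^ n) * v := by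
    intro n
    have hpow : (0:ℝ) < (2:ℝ)⁻¹ ^ (n+1) := by positivity
    calc ∫⁻ x : ℂ in A n, (ENNReal.ofReal ‖x‖)⁻¹
        ≤ ∫⁻ _ : ℂ in A n, (ENNReal.ofReal ((2:ℝ)⁻¹ ^ (n+1)))⁻¹ := by
          apply setLIntegral_mono' (measurableSet_ball.diff measurableSet_ball)
          intro x hx
          apply ENNReal.inv_le_inv'
          apply ENNReal.ofReal_le_ofReal
          have := hx.2
          simpa [mem_ball_zero_iff, not_lt] using this
      _ = (ENNReal.ofReal ((2:ℝ)⁻¹ ^ (n+1)))⁻¹ * volume (A n) := setLIntegral_const _ _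
      _ ≤ (ENNReal.ofReal ((2:ℝ)⁻¹ ^ (n+1)))⁻¹ * volume (Metric.ball (0:ℂ) ((2:ℝ)⁻¹ ^ n)) := by
          gcongr
          exact diff_subset
      _ = ENNReal.ofReal (((2:ℝ)⁻¹ ^ (n+1))⁻¹) *
            (ENNReal.ofReal (((2:ℝ)⁻¹ ^ n) ^ 2) * v) := by
          rw [ENNReal.ofReal_inv_of_pos hpow,
            Measure.addHaar_ball volume 0 (by positivity : (0:ℝ) ≤ (2:ℝ)⁻¹ ^ n),
            Complex.finrank_real_complex, hv]
      _ = ENNReal.ofReal (2 * (2:ℝ)⁻¹ ^ n) * v := by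
          rw [← mul_assoc, ← ENNReal.ofReal_mul (by positivity)]
          congr 2
          have h2n : ((2:ℝ))^n ≠ 0 := by positivity
          field_simp
          ring
  calc ∫⁻ x : ℂ in Metric.ball 0 1, (ENNReal.ofReal ‖x‖)⁻¹
      ≤ ∫⁻ x : ℂ in {0} ∪ ⋃ n, A n, (ENNReal.ofReal ‖x‖)⁻¹ := lintegral_mono_set hcover
    _ ≤ (∫⁻ x : ℂ in {(0:ℂ)}, (ENNReal.ofReal ‖x‖)⁻¹)
        + ∫⁻ x : ℂ in ⋃ n, A n, (ENNReal.ofReal ‖x‖)⁻¹ := lintegral_union_le _ _ _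
    _ ≤ 0 + ∑' n, ∫⁻ x : ℂ in A n, (ENNReal.ofReal ‖x‖)⁻¹ := by
        apply add_le_add
        · exact le_of_eq (setLIntegral_measure_zero _ _ (measure_singleton 0))
        · exact lintegral_iUnion_le _ _
    _ ≤ ∑' n : ℕ, ENNReal.ofReal (2 * (2:ℝ)⁻¹ ^ n) * v := by
        rw [zero_add]
        exact ENNReal.tsum_le_tsum hterm
    _ = (∑' n : ℕ, ENNReal.ofReal 2 * (ENNReal.ofReal (2:ℝ)⁻¹) ^ n) * v := by
        rw [ENNReal.tsum_mul_right]
        congr 1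
        apply tsum_congr
        intro n
        rw [ENNReal.ofReal_mul (by norm_num), ENNReal.ofReal_pow (by norm_num)]
    _ = ENNReal.ofReal 2 * (1 - ENNReal.ofReal (2:ℝ)⁻¹)⁻¹ * v := by
        rw [ENNReal.tsum_mul_left, ENNReal.tsum_geometric]
    _ < ⊤ := by
        apply ENNReal.mul_lt_top _ hvlt
        apply ENNReal.mul_lt_top ENNReal.ofReal_lt_top
        rw [ENNReal.inv_lt_top, tsub_pos_iff_lt]
        exact ENNReal.ofReal_lt_one.2 (by norm_num)

lemma lint_translate (a : ℂ) (r : ℝ) :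
    ∫⁻ y : ℂ in Metric.ball a r, (ENNReal.ofReal ‖y - a‖)⁻¹
      = ∫⁻ x : ℂ in Metric.ball (0:ℂ) r, (ENNReal.ofReal ‖x‖)⁻¹ := by
  have h := (measurePreserving_add_right (volume : Measure ℂ) a).setLIntegral_comp_emb
    (MeasurableEquiv.addRight a).measurableEmbedding
    (fun y => (ENNReal.ofReal ‖y - a‖)⁻¹) (Metric.ball 0 r)
  have himg : (fun x : ℂ => x + a) '' Metric.ball 0 r = Metric.ball a r := by
    ext y
    simp only [Set.mem_image, mem_ball_zero_iff, Metric.mem_ball, Complex.dist_eq]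
    constructor
    · rintro ⟨x, hx, rfl⟩
      simpa using hx
    · intro hy
      exact ⟨y - a, by simpa using hy, by ring⟩
  rw [himg] at h
  rw [← h]
  apply lintegral_congr
  intro x
  simp

lemma lint_inv_sq_top :
    ∫⁻ x : ℂ in (Metric.closedBall (0:ℂ) 5)ᶜ, ENNReal.ofReal ((‖x‖^2)⁻¹) = ⊤ := by
  set v : ℝ≥0∞ := volume (Metric.ball (0:ℂ) 1) with hv
  have hv0 : v ≠ 0 := (measure_ball_pos volume 0 one_pos).ne'
  have hvlt : v ≠ ⊤ := measure_ball_lt_top.ne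
  set T : ℕ → Set ℂ := fun n =>
    Metric.closedBall 0 (5 * 2 ^ (n+1)) \ Metric.closedBall 0 (5 * 2 ^ n) with hT
  have hpow : ∀ n : ℕ, (0:ℝ) < 5 * 2 ^ n := fun n => by positivity
  have hmeas : ∀ n, MeasurableSet (T n) :=
    fun n => measurableSet_closedBall.diff measurableSet_closedBall
  have hsub : (⋃ n, T n) ⊆ (Metric.closedBall (0:ℂ) 5)ᶜ := by
    intro x hx
    obtain ⟨n, hn⟩ := mem_iUnion.1 hx
    have h2 : ¬ ‖x‖ ≤ 5 * 2 ^ n := by simpa [mem_closedBall_zero_iff] using hn.2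
    simp only [mem_compl_iff, mem_closedBall_zero_iff, not_le]
    push_neg at h2
    have : (5:ℝ) ≤ 5 * 2 ^ n := by
      have : (1:ℝ) ≤ 2 ^ n := one_le_pow₀ (by norm_num)
      nlinarith
    linarith
  have hdisj : Pairwise (Function.onFun Disjoint T) := by
    have key : ∀ i j, i < j → Disjoint (T i) (T j) := by
      intro i j hij
      apply Set.disjoint_left.2
      intro x hxi hxj
      have h1 : ‖x‖ ≤ 5 * 2 ^ (i+1) := by simpa [mem_closedBall_zero_iff] using hxi.1
      have h2 : ¬ ‖x‖ ≤ 5 * 2 ^ j := by simpa [mem_closedBall_zero_iff] using hxj.2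
      have hle : (5:ℝ) * 2 ^ (i+1) ≤ 5 * 2 ^ j := by
        have h := pow_le_pow_right₀ (by norm_num : (1:ℝ) ≤ 2) (by omega : i + 1 ≤ j)
        linarith
      exact h2 (h1.trans hle)
    intro i j hij
    rcases hij.lt_or_gt with h | h
    · exact key i j h
    · exact (key j i h).symm
  have hvolT : ∀ n : ℕ, ENNReal.ofReal (75 * (2^n * 2^n) : ℝ) * v ≤ volume (T n) := by
    intro n
    have hbig : volume (Metric.closedBall (0:ℂ) (5 * 2 ^ (n+1)))
        = ENNReal.ofReal ((5 * 2 ^ (n+1) : ℝ)^2) * v := by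
      rw [Measure.addHaar_closedBall volume 0 (hpow (n+1)).le, Complex.finrank_real_complex, hv]
    have hsml : volume (Metric.closedBall (0:ℂ) (5 * 2 ^ n))
        = ENNReal.ofReal ((5 * 2 ^ n : ℝ)^2) * v := by
      rw [Measure.addHaar_closedBall volume 0 (hpow n).le, Complex.finrank_real_complex, hv]
    have hdiff : volume (T n) = volume (Metric.closedBall (0:ℂ) (5 * 2 ^ (n+1)))
        - volume (Metric.closedBall (0:ℂ) (5 * 2 ^ n)) := by
      apply measure_diff
      · apply closedBall_subset_closedBall
        have h := pow_le_pow_right₀ (by norm_num : (1:ℝ) ≤ 2) (by omega : n ≤ n + 1)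
        linarith
      · exact measurableSet_closedBall.nullMeasurableSet
      · exact measure_closedBall_lt_top.ne
    rw [hdiff, hbig, hsml]
    apply ENNReal.le_sub_of_add_le_right (ENNReal.mul_ne_top ENNReal.ofReal_ne_top hvlt)
    rw [← add_mul, ← ENNReal.ofReal_add (by positivity) (by positivity)]
    apply mul_le_mul_left ?_ v
    apply ENNReal.ofReal_le_ofReal
    have h2 : (2:ℝ) ^ (n+1) = 2 * 2 ^ n := by ring
    rw [h2]
    nlinarith [sq_nonneg ((2:ℝ)^n)]
  have hterm : ∀ n : ℕ, ENNReal.ofReal (3/4 : ℝ) * v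
      ≤ ∫⁻ x : ℂ in T n, ENNReal.ofReal ((‖x‖^2)⁻¹) := by
    intro n
    calc ENNReal.ofReal (3/4 : ℝ) * v
        = ENNReal.ofReal (((5 * 2 ^ (n+1) : ℝ)^2)⁻¹) * (ENNReal.ofReal (75 * (2^n * 2^n) : ℝ) * v) := by
          rw [← mul_assoc, ← ENNReal.ofReal_mul (by positivity)]
          congr 2
          have h2 : (2:ℝ) ^ (n+1) = 2 * 2 ^ n := by ring
          have h2n : ((2:ℝ))^n ≠ 0 := by positivity
          rw [h2]
          field_simp
          ring
      _ ≤ ENNReal.ofReal (((5 * 2 ^ (n+1) : ℝ)^2)⁻¹) * volume (T n) := by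
          gcongr
          exact hvolT n
      _ = ∫⁻ _ : ℂ in T n, ENNReal.ofReal (((5 * 2 ^ (n+1) : ℝ)^2)⁻¹) := (setLIntegral_const _ _).symm
      _ ≤ ∫⁻ x : ℂ in T n, ENNReal.ofReal ((‖x‖^2)⁻¹) := by
          apply setLIntegral_mono' (hmeas n)
          intro x hx
          apply ENNReal.ofReal_le_ofReal
          have h1 : ‖x‖ ≤ 5 * 2 ^ (n+1) := by simpa [mem_closedBall_zero_iff] using hx.1
          have h0 : ¬ ‖x‖ ≤ 5 * 2 ^ n := by simpa [mem_closedBall_zero_iff] using hx.2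
          push_neg at h0
          have hxpos : 0 < ‖x‖ := lt_trans (hpow n) h0
          apply inv_anti₀ (by positivity)
          nlinarith
  have htop : (⊤ : ℝ≥0∞) ≤ ∫⁻ x : ℂ in ⋃ n, T n, ENNReal.ofReal ((‖x‖^2)⁻¹) := by
    rw [lintegral_iUnion hmeas hdisj]
    calc (⊤:ℝ≥0∞) = ∑' _ : ℕ, ENNReal.ofReal (3/4:ℝ) * v := by
          rw [ENNReal.tsum_const_eq_top_of_ne_zero]
          exact mul_ne_zero (by simp) hv0
      _ ≤ _ := ENNReal.tsum_le_tsum hterm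
  have := le_trans htop (lintegral_mono_set hsub)
  exact top_le_iff.1 this

lemma lint_tail_cube :
    ∫⁻ y : ℂ in (Metric.closedBall (0:ℂ) 2)ᶜ, (ENNReal.ofReal (‖y‖^3))⁻¹ < ⊤ := by
  have hpt : ∀ y : ℂ, y ∈ (Metric.closedBall (0:ℂ) 2)ᶜ →
      (ENNReal.ofReal (‖y‖^3))⁻¹ ≤ ENNReal.ofReal ((27/8 : ℝ) * (1+‖y‖)^(-(3:ℝ))) := by
    intro y hy
    have h2 : (2:ℝ) < ‖y‖ := by
      simpa [mem_closedBall_zero_iff, not_le] using hy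
    have hypos : (0:ℝ) < ‖y‖ := by linarith
    have hcube : (0:ℝ) < ‖y‖^3 := by positivity
    rw [← ENNReal.ofReal_inv_of_pos hcube]
    apply ENNReal.ofReal_le_ofReal
    have hr3 : ((1:ℝ)+‖y‖) ^ (-(3:ℝ)) = ((1+‖y‖)^3)⁻¹ := by
      rw [Real.rpow_neg (by positivity), ← Real.rpow_natCast (1+‖y‖) 3]
      norm_num
    rw [hr3]
    have hle : ((1:ℝ)+‖y‖)^3 ≤ (27/8) * ‖y‖^3 := by
      have h32 : (1:ℝ)+‖y‖ ≤ (3/2) * ‖y‖ := by linarith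
      calc ((1:ℝ)+‖y‖)^3 ≤ ((3/2) * ‖y‖)^3 := by
            apply pow_le_pow_left₀ (by positivity) h32
        _ = (27/8) * ‖y‖^3 := by ring
    have hinv : ((27/8 : ℝ) * ‖y‖^3)⁻¹ ≤ ((1+‖y‖)^3)⁻¹ := inv_anti₀ (by positivity) hle
    calc (‖y‖^3)⁻¹ = (27/8 : ℝ) * ((27/8) * ‖y‖^3)⁻¹ := by
          rw [mul_inv, ← mul_assoc, mul_inv_cancel₀ (by norm_num : (27/8:ℝ) ≠ 0), one_mul]
      _ ≤ (27/8 : ℝ) * ((1+‖y‖)^3)⁻¹ :=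
          mul_le_mul_of_nonneg_left hinv (by norm_num)
  calc ∫⁻ y : ℂ in (Metric.closedBall (0:ℂ) 2)ᶜ, (ENNReal.ofReal (‖y‖^3))⁻¹
      ≤ ∫⁻ y : ℂ in (Metric.closedBall (0:ℂ) 2)ᶜ,
          ENNReal.ofReal ((27/8 : ℝ) * (1+‖y‖)^(-(3:ℝ))) :=
        setLIntegral_mono' measurableSet_closedBall.compl hpt
    _ ≤ ∫⁻ y : ℂ, ENNReal.ofReal ((27/8 : ℝ) * (1+‖y‖)^(-(3:ℝ))) :=
        setLIntegral_le_lintegral _ _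
    _ = ENNReal.ofReal (27/8 : ℝ) * ∫⁻ y : ℂ, ENNReal.ofReal ((1+‖y‖)^(-(3:ℝ))) := by
        simp_rw [ENNReal.ofReal_mul (by norm_num : (0:ℝ) ≤ 27/8)]
        exact lintegral_const_mul' _ _ ENNReal.ofReal_ne_top
    _ < ⊤ := by
        apply ENNReal.mul_lt_top ENNReal.ofReal_lt_top
        apply finite_integral_one_add_norm
        rw [Complex.finrank_real_complex]
        norm_num

lemma norm_fac (y : ℂ) : ‖y * (y^2 - 1)‖ = ‖y‖ * (‖y - 1‖ * ‖y + 1‖) := by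
  have h : y * (y^2 - 1) = y * ((y - 1) * (y + 1)) := by ring
  rw [h, norm_mul, norm_mul]

lemma ball_piece (a : ℂ)
    (hw : ∀ y ∈ Metric.ball a (1/2:ℝ), (1/4:ℝ) * ‖y - a‖ ≤ ‖y * (y^2-1)‖) :
    ∫⁻ y : ℂ in Metric.ball a (1/2:ℝ), (ENNReal.ofReal ‖y * (y^2 - 1)‖)⁻¹ < ⊤ := by
  have hne : ((ENNReal.ofReal (1/4:ℝ))⁻¹ : ℝ≥0∞) ≠ ⊤ := by
    rw [ENNReal.inv_ne_top]
    simp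
  calc ∫⁻ y : ℂ in Metric.ball a (1/2:ℝ), (ENNReal.ofReal ‖y * (y^2 - 1)‖)⁻¹
      ≤ ∫⁻ y : ℂ in Metric.ball a (1/2:ℝ),
          (ENNReal.ofReal (1/4:ℝ))⁻¹ * (ENNReal.ofReal ‖y - a‖)⁻¹ := by
        apply setLIntegral_mono' measurableSet_ball
        intro y hy
        calc (ENNReal.ofReal ‖y * (y^2 - 1)‖)⁻¹
            ≤ (ENNReal.ofReal ((1/4:ℝ) * ‖y - a‖))⁻¹ :=
              ENNReal.inv_le_inv' (ENNReal.ofReal_le_ofReal (hw y hy))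
          _ = (ENNReal.ofReal (1/4:ℝ))⁻¹ * (ENNReal.ofReal ‖y - a‖)⁻¹ := by
              rw [ENNReal.ofReal_mul (by norm_num)]
              rw [ENNReal.mul_inv (Or.inl (by simp)) (Or.inl ENNReal.ofReal_ne_top)]
    _ = (ENNReal.ofReal (1/4:ℝ))⁻¹
          * ∫⁻ y : ℂ in Metric.ball a (1/2:ℝ), (ENNReal.ofReal ‖y - a‖)⁻¹ :=
        lintegral_const_mul' _ _ hne
    _ < ⊤ := by
        apply ENNReal.mul_lt_top hne.lt_top
        rw [lint_translate a (1/2:ℝ)]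
        exact lt_of_le_of_lt (lintegral_mono_set (Metric.ball_subset_ball (by norm_num)))
          lint_inv_norm_ball

lemma outer_fin : ∫⁻ y : ℂ, (ENNReal.ofReal ‖y * (y^2 - 1)‖)⁻¹ < ⊤ := by
  set b0 : Set ℂ := Metric.ball (0:ℂ) (1/2:ℝ)
  set b1 : Set ℂ := Metric.ball (1:ℂ) (1/2:ℝ)
  set b2 : Set ℂ := Metric.ball (-1:ℂ) (1/2:ℝ)
  set M : Set ℂ := Metric.closedBall (0:ℂ) 2 \ (b0 ∪ b1 ∪ b2)
  set Fc : Set ℂ := (Metric.closedBall (0:ℂ) 2)ᶜ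
  have hcov : (univ : Set ℂ) ⊆ b0 ∪ b1 ∪ b2 ∪ M ∪ Fc := by
    intro y _
    by_cases h2 : y ∈ Metric.closedBall (0:ℂ) 2
    · by_cases hb : y ∈ b0 ∪ b1 ∪ b2
      · rcases hb with (h | h) | h
        · exact Or.inl (Or.inl (Or.inl (Or.inl h)))
        · exact Or.inl (Or.inl (Or.inl (Or.inr h)))
        · exact Or.inl (Or.inl (Or.inr h))
      · exact Or.inl (Or.inr ⟨h2, hb⟩)
    · exact Or.inr h2
  -- bounds on the three balls
  have hw0 : ∀ y ∈ Metric.ball (0:ℂ) (1/2:ℝ), (1/4:ℝ) * ‖y - 0‖ ≤ ‖y * (y^2-1)‖ := by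
    intro y hy
    have hy' : ‖y‖ < 1/2 := by simpa [mem_ball_zero_iff] using hy
    rw [norm_fac]
    have h1 : (1/2:ℝ) ≤ ‖y - 1‖ := by
      have := norm_sub_norm_le (1:ℂ) y
      rw [norm_sub_rev] at this
      simp only [norm_one] at this
      linarith
    have h2 : (1/2:ℝ) ≤ ‖y + 1‖ := by
      have := norm_sub_norm_le (-1:ℂ) y
      rw [norm_sub_rev] at this
      simp only [norm_neg, norm_one] at this
      have hyy : ‖y - -1‖ = ‖y + 1‖ := by rw [sub_neg_eq_add]
      rw [hyy] at this
      linarith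
    have hn : (0:ℝ) ≤ ‖y‖ := norm_nonneg y
    simp only [sub_zero]
    have s1 : (1/2:ℝ) * (1/2) ≤ ‖y - 1‖ * ‖y + 1‖ :=
      mul_le_mul h1 h2 (by norm_num) (by positivity)
    have s2 : ‖y‖ * ((1/2:ℝ)*(1/2)) ≤ ‖y‖ * (‖y - 1‖ * ‖y + 1‖) :=
      mul_le_mul_of_nonneg_left s1 hn
    nlinarith
  have hw1 : ∀ y ∈ Metric.ball (1:ℂ) (1/2:ℝ), (1/4:ℝ) * ‖y - 1‖ ≤ ‖y * (y^2-1)‖ := by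
    intro y hy
    have hy' : ‖y - 1‖ < 1/2 := mem_ball_iff_norm.1 hy
    rw [norm_fac]
    have h1 : (1/2:ℝ) ≤ ‖y‖ := by
      have h := norm_sub_norm_le (1:ℂ) (1 - y)
      have e1 : (1:ℂ) - (1 - y) = y := by ring
      rw [e1, norm_one, norm_sub_rev] at h
      linarith
    have h2 : (1/2:ℝ) ≤ ‖y + 1‖ := by
      have h := norm_sub_norm_le (2:ℂ) (2 - (y+1))
      have e1 : (2:ℂ) - (2 - (y+1)) = y + 1 := by ring
      have e2 : (2:ℂ) - (y+1) = -(y - 1) := by ring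
      have h2n : ‖(2:ℂ)‖ = 2 := by
        rw [show (2:ℂ) = ((2:ℝ) : ℂ) by norm_num, Complex.norm_real]
        norm_num
      rw [e1, e2, norm_neg, h2n] at h
      linarith
    have hn : (0:ℝ) ≤ ‖y + 1‖ := norm_nonneg _
    have s1 : ‖y - 1‖ * (1/2:ℝ) ≤ ‖y - 1‖ * ‖y + 1‖ :=
      mul_le_mul_of_nonneg_left h2 (norm_nonneg _)
    have s2 : (1/2:ℝ) * (‖y - 1‖ * ‖y + 1‖) ≤ ‖y‖ * (‖y - 1‖ * ‖y + 1‖) :=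
      mul_le_mul_of_nonneg_right h1 (by positivity)
    linarith
  have hw2 : ∀ y ∈ Metric.ball (-1:ℂ) (1/2:ℝ), (1/4:ℝ) * ‖y - -1‖ ≤ ‖y * (y^2-1)‖ := by
    intro y hy
    have hy' : ‖y + 1‖ < 1/2 := by
      have := mem_ball_iff_norm.1 hy
      rw [sub_neg_eq_add] at this
      exact this
    rw [norm_fac]
    have h1 : (1/2:ℝ) ≤ ‖y‖ := by
      have h := norm_sub_norm_le (-1:ℂ) (-1 - y)
      have e1 : (-1:ℂ) - (-1 - y) = y := by ring
      have e2 : (-1:ℂ) - y = -(y + 1) := by ring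
      rw [e1, e2, norm_neg, norm_neg, norm_one] at h
      linarith
    have h2 : (1/2:ℝ) ≤ ‖y - 1‖ := by
      have h := norm_sub_norm_le (-2:ℂ) (-2 - (y - 1))
      have e1 : (-2:ℂ) - (-2 - (y - 1)) = y - 1 := by ring
      have e2 : (-2:ℂ) - (y - 1) = -(y + 1) := by ring
      have h2n : ‖(-2:ℂ)‖ = 2 := by
        rw [show (-2:ℂ) = -((2:ℝ) : ℂ) by norm_num, norm_neg, Complex.norm_real]
        norm_num
      have h2n' : ‖(2:ℂ)‖ = 2 := by
        rw [show (2:ℂ) = ((2:ℝ) : ℂ) by norm_num, Complex.norm_real]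
        norm_num
      rw [e1, e2, norm_neg, norm_neg, h2n'] at h
      linarith
    have hn : (0:ℝ) ≤ ‖y + 1‖ := norm_nonneg _
    rw [sub_neg_eq_add]
    have s1 : (1/2:ℝ) * ‖y + 1‖ ≤ ‖y - 1‖ * ‖y + 1‖ :=
      mul_le_mul_of_nonneg_right h2 hn
    have s2 : (1/2:ℝ) * (‖y - 1‖ * ‖y + 1‖) ≤ ‖y‖ * (‖y - 1‖ * ‖y + 1‖) :=
      mul_le_mul_of_nonneg_right h1 (by positivity)
    linarith
  -- piece bounds
  have hB0 : ∫⁻ y : ℂ in b0, (ENNReal.ofReal ‖y * (y^2 - 1)‖)⁻¹ < ⊤ := ball_piece 0 hw0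
  have hB1 : ∫⁻ y : ℂ in b1, (ENNReal.ofReal ‖y * (y^2 - 1)‖)⁻¹ < ⊤ := ball_piece 1 hw1
  have hB2 : ∫⁻ y : ℂ in b2, (ENNReal.ofReal ‖y * (y^2 - 1)‖)⁻¹ < ⊤ := ball_piece (-1) hw2
  have hMmeas : MeasurableSet M :=
    measurableSet_closedBall.diff
      ((measurableSet_ball.union measurableSet_ball).union measurableSet_ball)
  have hM : ∫⁻ y : ℂ in M, (ENNReal.ofReal ‖y * (y^2 - 1)‖)⁻¹ < ⊤ := by
    have hpt : ∀ y ∈ M, (ENNReal.ofReal ‖y * (y^2 - 1)‖)⁻¹ ≤ (ENNReal.ofReal (1/8:ℝ))⁻¹ := by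
      intro y hy
      apply ENNReal.inv_le_inv'
      apply ENNReal.ofReal_le_ofReal
      obtain ⟨-, hnb⟩ := hy
      simp only [mem_union, not_or] at hnb
      obtain ⟨⟨h0', h1'⟩, h2'⟩ := hnb
      have h0 : (1/2:ℝ) ≤ ‖y‖ := by
        have := h0'
        simp only [b0, mem_ball_zero_iff, not_lt] at this
        exact this
      have h1 : (1/2:ℝ) ≤ ‖y - 1‖ := by
        have := h1'
        simp only [b1, mem_ball_iff_norm, not_lt] at this
        exact this
      have h2 : (1/2:ℝ) ≤ ‖y + 1‖ := by
        have := h2'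
        simp only [b2, mem_ball_iff_norm, sub_neg_eq_add, not_lt] at this
        exact this
      rw [norm_fac]
      nlinarith [mul_le_mul h1 h2 (by norm_num : (0:ℝ) ≤ 1/2) (by positivity),
        mul_le_mul h0 (mul_le_mul h1 h2 (by norm_num : (0:ℝ) ≤ 1/2) (by positivity))
          (by norm_num : (0:ℝ) ≤ 1/2*(1/2)) (by positivity)]
    calc ∫⁻ y : ℂ in M, (ENNReal.ofReal ‖y * (y^2 - 1)‖)⁻¹
        ≤ ∫⁻ _ : ℂ in M, (ENNReal.ofReal (1/8:ℝ))⁻¹ := setLIntegral_mono' hMmeas hpt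
      _ = (ENNReal.ofReal (1/8:ℝ))⁻¹ * volume M := setLIntegral_const _ _
      _ < ⊤ := by
          apply ENNReal.mul_lt_top
          · rw [ENNReal.inv_lt_top]
            exact ENNReal.ofReal_pos.2 (by norm_num)
          · exact (measure_mono diff_subset).trans_lt measure_closedBall_lt_top
  have hFc : ∫⁻ y : ℂ in Fc, (ENNReal.ofReal ‖y * (y^2 - 1)‖)⁻¹ < ⊤ := by
    have hpt : ∀ y ∈ Fc, (ENNReal.ofReal ‖y * (y^2 - 1)‖)⁻¹
        ≤ (ENNReal.ofReal (3/4:ℝ))⁻¹ * (ENNReal.ofReal (‖y‖^3))⁻¹ := by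
      intro y hy
      have h2 : (2:ℝ) < ‖y‖ := by
        simpa [Fc, mem_closedBall_zero_iff, not_le] using hy
      have hwlow : (3/4:ℝ) * ‖y‖^3 ≤ ‖y * (y^2 - 1)‖ := by
        rw [norm_mul]
        have hsq : ‖y^2‖ = ‖y‖^2 := by rw [norm_pow]
        have hlow : ‖y‖^2 - 1 ≤ ‖y^2 - 1‖ := by
          have h := norm_sub_norm_le (y^2) 1
          rw [hsq, norm_one] at h
          exact h
        have h34 : (3/4:ℝ) * ‖y‖^2 ≤ ‖y‖^2 - 1 := by nlinarith
        have hyn : (0:ℝ) ≤ ‖y‖ := by linarith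
        calc (3/4:ℝ) * ‖y‖^3 = ‖y‖ * ((3/4) * ‖y‖^2) := by ring
          _ ≤ ‖y‖ * ‖y^2 - 1‖ := by
              apply mul_le_mul_of_nonneg_left (le_trans h34 hlow) hyn
      calc (ENNReal.ofReal ‖y * (y^2 - 1)‖)⁻¹
          ≤ (ENNReal.ofReal ((3/4:ℝ) * ‖y‖^3))⁻¹ :=
            ENNReal.inv_le_inv' (ENNReal.ofReal_le_ofReal hwlow)
        _ = (ENNReal.ofReal (3/4:ℝ))⁻¹ * (ENNReal.ofReal (‖y‖^3))⁻¹ := by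
            rw [ENNReal.ofReal_mul (by norm_num)]
            rw [ENNReal.mul_inv (Or.inl (by simp)) (Or.inl ENNReal.ofReal_ne_top)]
    have hne : ((ENNReal.ofReal (3/4:ℝ))⁻¹ : ℝ≥0∞) ≠ ⊤ := by
      rw [ENNReal.inv_ne_top]; simp
    calc ∫⁻ y : ℂ in Fc, (ENNReal.ofReal ‖y * (y^2 - 1)‖)⁻¹
        ≤ ∫⁻ y : ℂ in Fc, (ENNReal.ofReal (3/4:ℝ))⁻¹ * (ENNReal.ofReal (‖y‖^3))⁻¹ :=
          setLIntegral_mono' measurableSet_closedBall.compl hpt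
      _ = (ENNReal.ofReal (3/4:ℝ))⁻¹ * ∫⁻ y : ℂ in Fc, (ENNReal.ofReal (‖y‖^3))⁻¹ :=
          lintegral_const_mul' _ _ hne
      _ < ⊤ := ENNReal.mul_lt_top hne.lt_top lint_tail_cube
  calc ∫⁻ y : ℂ, (ENNReal.ofReal ‖y * (y^2 - 1)‖)⁻¹
      = ∫⁻ y : ℂ in univ, (ENNReal.ofReal ‖y * (y^2 - 1)‖)⁻¹ := by
        rw [Measure.restrict_univ]
    _ ≤ ∫⁻ y : ℂ in b0 ∪ b1 ∪ b2 ∪ M ∪ Fc, (ENNReal.ofReal ‖y * (y^2 - 1)‖)⁻¹ :=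
        lintegral_mono_set hcov
    _ ≤ (∫⁻ y : ℂ in b0 ∪ b1 ∪ b2 ∪ M, (ENNReal.ofReal ‖y * (y^2 - 1)‖)⁻¹)
        + ∫⁻ y : ℂ in Fc, (ENNReal.ofReal ‖y * (y^2 - 1)‖)⁻¹ := lintegral_union_le _ _ _
    _ ≤ ((∫⁻ y : ℂ in b0 ∪ b1 ∪ b2, (ENNReal.ofReal ‖y * (y^2 - 1)‖)⁻¹)
        + ∫⁻ y : ℂ in M, (ENNReal.ofReal ‖y * (y^2 - 1)‖)⁻¹)
        + ∫⁻ y : ℂ in Fc, (ENNReal.ofReal ‖y * (y^2 - 1)‖)⁻¹ := by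
        gcongr
        exact lintegral_union_le _ _ _
    _ ≤ (((∫⁻ y : ℂ in b0 ∪ b1, (ENNReal.ofReal ‖y * (y^2 - 1)‖)⁻¹)
        + ∫⁻ y : ℂ in b2, (ENNReal.ofReal ‖y * (y^2 - 1)‖)⁻¹)
        + ∫⁻ y : ℂ in M, (ENNReal.ofReal ‖y * (y^2 - 1)‖)⁻¹)
        + ∫⁻ y : ℂ in Fc, (ENNReal.ofReal ‖y * (y^2 - 1)‖)⁻¹ := by
        gcongr
        exact lintegral_union_le _ _ _
    _ ≤ ((((∫⁻ y : ℂ in b0, (ENNReal.ofReal ‖y * (y^2 - 1)‖)⁻¹)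
        + ∫⁻ y : ℂ in b1, (ENNReal.ofReal ‖y * (y^2 - 1)‖)⁻¹)
        + ∫⁻ y : ℂ in b2, (ENNReal.ofReal ‖y * (y^2 - 1)‖)⁻¹)
        + ∫⁻ y : ℂ in M, (ENNReal.ofReal ‖y * (y^2 - 1)‖)⁻¹)
        + ∫⁻ y : ℂ in Fc, (ENNReal.ofReal ‖y * (y^2 - 1)‖)⁻¹ := by
        gcongr
        exact lintegral_union_le _ _ _
    _ < ⊤ := by
        apply ENNReal.add_lt_top.2
        refine ⟨ENNReal.add_lt_top.2 ⟨ENNReal.add_lt_top.2 ⟨ENNReal.add_lt_top.2 ⟨hB0, hB1⟩, hB2⟩, hM⟩, hFc⟩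

lemma main_int {c : ℝ} (hc : 1/2 < c) :
    Integrable (fun z : ℂ × ℂ => (max ‖z.1 ^ 2 * z.2 * (z.2 ^ 2 - 1)‖ 1) ^ (-(2 * c)))
      (volume : Measure (ℂ × ℂ)) := by
  set F : ℂ × ℂ → ℝ := fun z => (max ‖z.1 ^ 2 * z.2 * (z.2 ^ 2 - 1)‖ 1) ^ (-(2 * c)) with hF
  have hcont : Continuous F := by
    apply Continuous.rpow_const
    · apply Continuous.max
      · apply Continuous.norm
        fun_prop
      · exact continuous_const
    · intro z
      left
      exact (lt_of_lt_of_le one_pos (le_max_right _ _)).ne'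
  have hnn : ∀ z, 0 ≤ F z := fun z =>
    Real.rpow_nonneg (le_trans zero_le_one (le_max_right _ _)) _
  refine ⟨hcont.aestronglyMeasurable, ?_⟩
  rw [hasFiniteIntegral_iff_ofReal (Filter.Eventually.of_forall hnn)]
  have hmeas : AEMeasurable (fun z : ℂ × ℂ => ENNReal.ofReal (F z))
      ((volume : Measure ℂ).prod (volume : Measure ℂ)) := by
    rw [← Measure.volume_eq_prod]
    exact (ENNReal.measurable_ofReal.comp hcont.measurable).aemeasurable
  rw [Measure.volume_eq_prod, lintegral_prod_symm _ hmeas]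
  set K := ∫⁻ u : ℂ, ENNReal.ofReal ((max (‖u‖^2) 1) ^ (-(2*c))) with hK
  have hKlt : K < ⊤ := finK hc
  have hinner : ∀ y : ℂ, ‖y * (y^2 - 1)‖ ≠ 0 →
      (∫⁻ x : ℂ, ENNReal.ofReal (F (x, y))) = (ENNReal.ofReal ‖y * (y^2 - 1)‖)⁻¹ * K := by
    intro y hy
    set t := ‖y * (y^2 - 1)‖ with htdef
    have ht : 0 < t := lt_of_le_of_ne (norm_nonneg _) (Ne.symm hy)
    have hR : 0 < Real.sqrt t := Real.sqrt_pos.2 ht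
    have hR2 : Real.sqrt t ^ 2 = t := Real.sq_sqrt ht.le
    have hFxy : ∀ x : ℂ, F (x, y)
        = (max (‖Real.sqrt t • x‖^2) 1) ^ (-(2*c)) := by
      intro x
      have h1 : ‖x ^ 2 * y * (y ^ 2 - 1)‖ = ‖x‖^2 * t := by
        rw [mul_assoc, norm_mul, norm_pow]
      have h2 : ‖Real.sqrt t • x‖^2 = ‖x‖^2 * t := by
        rw [norm_smul, Real.norm_eq_abs, abs_of_pos hR, mul_pow, hR2]
        ring
      rw [hF]
      simp only [h1, h2]
    simp_rw [hFxy]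
    rw [lintegral_comp_smul' (fun u : ℂ => ENNReal.ofReal ((max (‖u‖^2) 1) ^ (-(2*c)))) hR]
    rw [hR2, ENNReal.ofReal_inv_of_pos ht]
  have hnull : volume ({0, 1, -1} : Set ℂ) = 0 :=
    (Set.toFinite _).measure_zero _
  have hae : ∀ᵐ y : ℂ, (∫⁻ x : ℂ, ENNReal.ofReal (F (x, y)))
      ≤ (ENNReal.ofReal ‖y * (y^2 - 1)‖)⁻¹ * K := by
    filter_upwards [compl_mem_ae_iff.2 hnull] with y hy
    have hy0 : y ≠ 0 ∧ y ≠ 1 ∧ y ≠ -1 := by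
      simp only [mem_compl_iff, mem_insert_iff, mem_singleton_iff, not_or] at hy
      exact hy
    have hne : ‖y * (y^2 - 1)‖ ≠ 0 := by
      rw [norm_ne_zero_iff]
      intro h
      rcases mul_eq_zero.1 h with h0 | h1
      · exact hy0.1 h0
      · have : (y - 1) * (y + 1) = 0 := by rw [← h1]; ring
        rcases mul_eq_zero.1 this with h2 | h3
        · exact hy0.2.1 (by linear_combination h2)
        · exact hy0.2.2 (by linear_combination h3)
    exact le_of_eq (hinner y hne)
  calc ∫⁻ y : ℂ, ∫⁻ x : ℂ, ENNReal.ofReal (F (x, y))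
      ≤ ∫⁻ y : ℂ, (ENNReal.ofReal ‖y * (y^2 - 1)‖)⁻¹ * K := lintegral_mono_ae hae
    _ = (∫⁻ y : ℂ, (ENNReal.ofReal ‖y * (y^2 - 1)‖)⁻¹) * K :=
        lintegral_mul_const' K _ hKlt.ne
    _ < ⊤ := ENNReal.mul_lt_top outer_fin hKlt

lemma vol_univ_top : (volume : Measure (ℂ × ℂ)) univ = ⊤ := by
  rw [Measure.volume_eq_prod, ← Set.univ_prod_univ, Measure.prod_prod]
  have h1 : (volume : Measure ℂ) univ = ⊤ := measure_univ_of_isAddLeftInvariant _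
  rw [h1]
  simp

lemma main_nonint {c : ℝ} (hc : c ≤ 1/2) :
    ¬ Integrable (fun z : ℂ × ℂ => (max ‖z.1 ^ 2 * z.2 * (z.2 ^ 2 - 1)‖ 1) ^ (-(2 * c)))
      (volume : Measure (ℂ × ℂ)) := by
  set F : ℂ × ℂ → ℝ := fun z => (max ‖z.1 ^ 2 * z.2 * (z.2 ^ 2 - 1)‖ 1) ^ (-(2 * c)) with hF
  have hmax1 : ∀ z : ℂ × ℂ, (1:ℝ) ≤ max ‖z.1 ^ 2 * z.2 * (z.2 ^ 2 - 1)‖ 1 :=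
    fun z => le_max_right _ _
  rcases le_or_gt c 0 with hc0 | hc0
  · -- c ≤ 0 : integrand ≥ 1 everywhere
    intro h
    have h1 : Integrable (fun _ : ℂ × ℂ => (1:ℝ)) (volume : Measure (ℂ × ℂ)) := by
      apply h.mono' aestronglyMeasurable_const
      apply Filter.Eventually.of_forall
      intro z
      rw [norm_one]
      exact Real.one_le_rpow (hmax1 z) (by linarith)
    rw [integrable_const_iff] at h1
    rcases h1 with h1 | h1
    · exact one_ne_zero h1
    · rw [isFiniteMeasure_iff, vol_univ_top] at h1
      exact lt_irrefl _ h1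
  · -- 0 < c ≤ 1/2
    intro h
    have hnn : ∀ z, 0 ≤ F z := fun z =>
      Real.rpow_nonneg (le_trans zero_le_one (le_max_right _ _)) _
    have hfin := (hasFiniteIntegral_iff_ofReal (Filter.Eventually.of_forall hnn)).1 h.2
    set A : Set ℂ := (Metric.closedBall (0:ℂ) 5)ᶜ with hA
    set B : Set ℂ := Metric.closedBall (2:ℂ) (1/2) with hB
    have hptw : ∀ z ∈ A ×ˢ B,
        ENNReal.ofReal ((19 * ‖z.1‖^2)⁻¹) ≤ ENNReal.ofReal (F z) := by
      rintro ⟨x, y⟩ ⟨hx, hy⟩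
      have hx5 : (5:ℝ) < ‖x‖ := by
        simpa [hA, mem_closedBall_zero_iff, not_le] using hx
      have hy2 : ‖y - 2‖ ≤ 1/2 := by
        exact mem_closedBall_iff_norm.1 hy
      have h2n : ‖(2:ℂ)‖ = 2 := by
        rw [show (2:ℂ) = ((2:ℝ) : ℂ) by norm_num, Complex.norm_real]
        norm_num
      have hyn : ‖y‖ ≤ 5/2 := by
        have h := norm_add_le (y - 2) 2
        rw [sub_add_cancel, h2n] at h
        linarith
      have hy21 : ‖y^2 - 1‖ ≤ ‖y‖^2 + 1 := by
        have h := norm_sub_le (y^2) 1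
        rw [norm_pow, norm_one] at h
        exact h
      have hW : ‖x ^ 2 * y * (y ^ 2 - 1)‖ ≤ 19 * ‖x‖^2 := by
        rw [mul_assoc, norm_mul, norm_pow, norm_mul]
        have hyy : ‖y‖ * ‖y^2 - 1‖ ≤ 19 := by nlinarith [norm_nonneg y, norm_nonneg (y^2-1)]
        nlinarith [sq_nonneg ‖x‖, norm_nonneg x]
      have hb1 : (1:ℝ) ≤ 19 * ‖x‖^2 := by nlinarith
      have hmaxle : max ‖x ^ 2 * y * (y ^ 2 - 1)‖ 1 ≤ 19 * ‖x‖^2 := max_le hW hb1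
      apply ENNReal.ofReal_le_ofReal
      have hstep1 : ((19:ℝ) * ‖x‖^2) ^ (-(2*c)) ≤ F (x, y) := by
        apply Real.rpow_le_rpow_of_nonpos
          (lt_of_lt_of_le one_pos (hmax1 (x, y))) hmaxle (by linarith)
      have hstep2 : ((19:ℝ) * ‖x‖^2) ^ (-(1:ℝ)) ≤ ((19:ℝ) * ‖x‖^2) ^ (-(2*c)) :=
        Real.rpow_le_rpow_of_exponent_le hb1 (by linarith)
      rw [Real.rpow_neg_one] at hstep2
      linarith
    have hAB : MeasurableSet (A ×ˢ B) :=
      (measurableSet_closedBall.compl).prod measurableSet_closedBall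
    have hBpos : (0:ℝ≥0∞) < volume B :=
      lt_of_lt_of_le (measure_ball_pos volume 2 (by norm_num)) (measure_mono ball_subset_closedBall)
    have hBne : volume B ≠ ⊤ := measure_closedBall_lt_top.ne
    have hprod : ∫⁻ z : ℂ × ℂ in A ×ˢ B, ENNReal.ofReal ((19 * ‖z.1‖^2)⁻¹) = ⊤ := by
      rw [Measure.volume_eq_prod, ← Measure.prod_restrict]
      rw [lintegral_prod _ (by fun_prop)]
      have hin : ∀ x : ℂ, ∫⁻ _ : ℂ in B, ENNReal.ofReal ((19 * ‖x‖^2)⁻¹)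
          = ENNReal.ofReal ((19 * ‖x‖^2)⁻¹) * volume B := by
        intro x
        rw [setLIntegral_const]
      simp_rw [hin]
      rw [lintegral_mul_const' _ _ hBne]
      have hAint : ∫⁻ x : ℂ in A, ENNReal.ofReal ((19 * ‖x‖^2)⁻¹) = ⊤ := by
        have heq : ∀ x : ℂ, ENNReal.ofReal (((19:ℝ) * ‖x‖^2)⁻¹)
            = ENNReal.ofReal ((19:ℝ)⁻¹) * ENNReal.ofReal ((‖x‖^2)⁻¹) := by
          intro x
          rw [← ENNReal.ofReal_mul (by norm_num), mul_inv]
        simp_rw [heq]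
        rw [lintegral_const_mul' _ _ ENNReal.ofReal_ne_top, lint_inv_sq_top,
          ENNReal.mul_top (ENNReal.ofReal_pos.2 (by norm_num : (0:ℝ) < 19⁻¹)).ne']
      rw [hAint, ENNReal.top_mul hBpos.ne']
    have htop : ∫⁻ z : ℂ × ℂ, ENNReal.ofReal (F z) = ⊤ := by
      apply top_le_iff.1
      calc (⊤:ℝ≥0∞) = ∫⁻ z : ℂ × ℂ in A ×ˢ B, ENNReal.ofReal ((19 * ‖z.1‖^2)⁻¹) := hprod.symm
        _ ≤ ∫⁻ z : ℂ × ℂ in A ×ˢ B, ENNReal.ofReal (F z) := setLIntegral_mono' hAB hptw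
        _ ≤ ∫⁻ z : ℂ × ℂ, ENNReal.ofReal (F z) := setLIntegral_le_lintegral _ _
    rw [htop] at hfin
    exact lt_irrefl _ hfin

end Stmt5Aux

open Stmt5Aux

set_option maxHeartbeats 1000000 in
/-- for `P(z₁,z₂) = z₁²z₂(z₂²-1)` on `ℂ²`: `{|P| ≤ 1}` has finite volume,
`∫ max(|P|,1)^{-2c} dV < ∞` for `c > 1/2` and diverges for `c ≤ 1/2`; hence
`ĉ∞(P) = 1/2`. -/
theorem stmt5 (P : ℂ × ℂ → ℂ) (hP : ∀ z : ℂ × ℂ, P z = z.1 ^ 2 * z.2 * (z.2 ^ 2 - 1)) :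
    volume {z : ℂ × ℂ | ‖P z‖ ≤ 1} < ⊤ ∧
    (∀ c : ℝ, 1 / 2 < c →
      Integrable (fun z : ℂ × ℂ => (max ‖P z‖ 1) ^ (-(2 * c))) volume) ∧
    (∀ c : ℝ, c ≤ 1 / 2 →
      ¬ Integrable (fun z : ℂ × ℂ => (max ‖P z‖ 1) ^ (-(2 * c))) volume) ∧
    sInf {c : ℝ | 0 < c ∧
      Integrable (fun z : ℂ × ℂ => (max ‖P z‖ 1) ^ (-(2 * c))) volume} = 1 / 2 := by
  have hPfun : P = fun z : ℂ × ℂ => z.1 ^ 2 * z.2 * (z.2 ^ 2 - 1) := funext hP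
  subst hPfun
  have hint : ∀ c : ℝ, 1 / 2 < c →
      Integrable (fun z : ℂ × ℂ =>
        (max ‖z.1 ^ 2 * z.2 * (z.2 ^ 2 - 1)‖ 1) ^ (-(2 * c))) volume :=
    fun c hc => main_int hc
  have hnonint : ∀ c : ℝ, c ≤ 1 / 2 →
      ¬ Integrable (fun z : ℂ × ℂ =>
        (max ‖z.1 ^ 2 * z.2 * (z.2 ^ 2 - 1)‖ 1) ^ (-(2 * c))) volume :=
    fun c hc => main_nonint hc
  refine ⟨?_, hint, hnonint, ?_⟩
  · -- finite volume of {|P| ≤ 1}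
    have h1 := hint 1 (by norm_num)
    have hnn : ∀ z : ℂ × ℂ, 0 ≤ (max ‖z.1 ^ 2 * z.2 * (z.2 ^ 2 - 1)‖ 1) ^ (-(2 * (1:ℝ))) :=
      fun z => Real.rpow_nonneg (le_trans zero_le_one (le_max_right _ _)) _
    have hfin := (hasFiniteIntegral_iff_ofReal (Filter.Eventually.of_forall hnn)).1 h1.2
    set S : Set (ℂ × ℂ) := {z : ℂ × ℂ | ‖z.1 ^ 2 * z.2 * (z.2 ^ 2 - 1)‖ ≤ 1} with hS
    calc volume S = ∫⁻ _ in S, 1 ∂volume := (setLIntegral_one _).symm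
      _ ≤ ∫⁻ z : ℂ × ℂ in S,
          ENNReal.ofReal ((max ‖z.1 ^ 2 * z.2 * (z.2 ^ 2 - 1)‖ 1) ^ (-(2 * (1:ℝ)))) ∂volume := by
          apply setLIntegral_mono
          · apply ENNReal.measurable_ofReal.comp
            apply Continuous.measurable
            apply Continuous.rpow_const
            · exact (Continuous.norm (by fun_prop)).max continuous_const
            · intro z
              left
              exact (lt_of_lt_of_le one_pos (le_max_right _ _)).ne'
          · intro z hz
            have hmax : max ‖z.1 ^ 2 * z.2 * (z.2 ^ 2 - 1)‖ 1 = 1 := max_eq_right hz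
            rw [hmax, Real.one_rpow]
            simp
      _ ≤ ∫⁻ z : ℂ × ℂ, ENNReal.ofReal
            ((max ‖z.1 ^ 2 * z.2 * (z.2 ^ 2 - 1)‖ 1) ^ (-(2 * (1:ℝ)))) ∂volume :=
          setLIntegral_le_lintegral _ _
      _ < ⊤ := hfin
  · -- the sInf
    have hset : {c : ℝ | 0 < c ∧ Integrable (fun z : ℂ × ℂ =>
        (max ‖z.1 ^ 2 * z.2 * (z.2 ^ 2 - 1)‖ 1) ^ (-(2 * c))) volume} = Ioi (1/2 : ℝ) := by
      ext c
      simp only [mem_setOf_eq, mem_Ioi]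
      constructor
      · rintro ⟨hc0, hci⟩
        by_contra hle
        push_neg at hle
        exact hnonint c hle hci
      · intro hc
        exact ⟨by linarith, hint c hc⟩
    rw [hset]
    exact csInf_Ioi
end
end
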